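/- arXiv:1302.5372 — 3 statements merged into one kernel-verified Lean document; each statement's English description precedes it below -/
import Mathlib

section
/- For every f ∈ K[x_0,…,x_n], every w ∈ Γ^{n+1}, and every v ∈ Γ^{n+1}, there exists ε > 0 such that in_v(in_w(f)) = in_{w+ε'v}(f) for all ε' ∈ Γ with 0 < ε' < ε. -/
open MvPolynomial
open scoped Classical

noncomputable section

/-- Dot product `w·u` of a real weight vector with a nonnegative exponent vector. -/
def dotN {m : ℕ} (w : Fin m → ℝ) (u : Fin m →₀ ℕ) : ℝ := ∑ i, w i * (u i : ℝ)

/-- Dot product `w·u` of a real weight vector with an integer exponent vector. -/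
def dotZ {n : ℕ} (w : Fin n → ℝ) (u : Fin n → ℤ) : ℝ := ∑ i, w i * (u i : ℝ)

/-- Dot product of two real vectors. -/
def dotR {m : ℕ} (c x : Fin m → ℝ) : ℝ := ∑ i, c i * x i

/-- A field `K` together with: a nontrivial real-valued (additive) valuation
`val : K* → ℝ` (recorded as a function on `K`, constrained only at nonzero elements);
a residue field `𝕜` with the reduction map `res : K → 𝕜` (the canonical map
`R → 𝕜 = R/𝔪` on the valuation ring `R = {a : val a ≥ 0}`, junk elsewhere); and a fixed
splitting `t` of the valuation, i.e. a group-homomorphic section `w ↦ t^w` of `val`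
defined on the value group `Γ = im val`. -/
structure ValSetup (K 𝕜 : Type) [Field K] [Field 𝕜] where
  val : K → ℝ
  val_mul : ∀ {a b : K}, a ≠ 0 → b ≠ 0 → val (a * b) = val a + val b
  val_add : ∀ {a b : K}, a ≠ 0 → b ≠ 0 → a + b ≠ 0 → min (val a) (val b) ≤ val (a + b)
  val_one : val 1 = 0
  val_nontrivial : ∃ a : K, a ≠ 0 ∧ val a ≠ 0
  res : K → 𝕜
  res_add : ∀ {a b : K}, (a = 0 ∨ 0 ≤ val a) → (b = 0 ∨ 0 ≤ val b) → res (a + b) = res a + res b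
  res_mul : ∀ {a b : K}, (a = 0 ∨ 0 ≤ val a) → (b = 0 ∨ 0 ≤ val b) → res (a * b) = res a * res b
  res_one : res 1 = 1
  res_zero : res 0 = 0
  res_eq_zero_iff : ∀ {a : K}, a ≠ 0 → 0 ≤ val a → (res a = 0 ↔ 0 < val a)
  res_surjective : ∀ c : 𝕜, ∃ a : K, (a = 0 ∨ 0 ≤ val a) ∧ res a = c
  t : ℝ → K
  t_ne_zero : ∀ {r : ℝ}, (∃ a : K, a ≠ 0 ∧ val a = r) → t r ≠ 0
  t_add : ∀ {r₁ r₂ : ℝ}, (∃ a : K, a ≠ 0 ∧ val a = r₁) → (∃ a : K, a ≠ 0 ∧ val a = r₂) →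
    t (r₁ + r₂) = t r₁ * t r₂
  val_t : ∀ {r : ℝ}, (∃ a : K, a ≠ 0 ∧ val a = r) → val (t r) = r

namespace ValSetup

variable {K 𝕜 : Type} [Field K] [Field 𝕜]

/-- The value group `Γ = val(K*) ⊆ ℝ`. -/
def Gamma (V : ValSetup K 𝕜) : Set ℝ := {r : ℝ | ∃ a : K, a ≠ 0 ∧ V.val a = r}

/-- `trop(f)(w) = min { val(c_u) + w·u : c_u ≠ 0 }` for `f = Σ_u c_u x^u ∈ K[x_0,…,x_{m-1}]`. -/
def trop (V : ValSetup K 𝕜) {m : ℕ} (f : MvPolynomial (Fin m) K) (w : Fin m → ℝ) : ℝ :=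
  sInf ((fun u => V.val (coeff u f) + dotN w u) '' (f.support : Set (Fin m →₀ ℕ)))

/-- The initial form `in_w(f) = Σ_{val(c_u)+w·u = trop(f)(w)} (t^{-val(c_u)} c_u)‾ x^u`
in `𝕜[x_0,…,x_{m-1}]`. -/
def initialForm (V : ValSetup K 𝕜) {m : ℕ} (w : Fin m → ℝ) (f : MvPolynomial (Fin m) K) :
    MvPolynomial (Fin m) 𝕜 :=
  ∑ u ∈ f.support.filter (fun u => V.val (coeff u f) + dotN w u = V.trop f w),
    monomial u (V.res (V.t (-(V.val (coeff u f))) * coeff u f))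

/-- The initial ideal `in_w(I) = ⟨in_w(f) : f ∈ I⟩ ⊆ 𝕜[x_0,…,x_{m-1}]`. -/
def initialIdeal (V : ValSetup K 𝕜) {m : ℕ} (w : Fin m → ℝ)
    (I : Ideal (MvPolynomial (Fin m) K)) : Ideal (MvPolynomial (Fin m) 𝕜) :=
  Ideal.span {g | ∃ f ∈ I, g = V.initialForm w f}

/-- The Gröbner region `C_I[w] = {w' ∈ Γ^m : in_{w'}(I) = in_w(I)}`. -/
def groebnerRegion (V : ValSetup K 𝕜) {m : ℕ} (I : Ideal (MvPolynomial (Fin m) K))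
    (w : Fin m → ℝ) : Set (Fin m → ℝ) :=
  {w' | (∀ i, w' i ∈ V.Gamma) ∧ V.initialIdeal w' I = V.initialIdeal w I}

end ValSetup

/-- `trop(g)(v) = min { v·u : c_u ≠ 0 }` for `g ∈ 𝕜[x]`, w.r.t. the trivial valuation on `𝕜`. -/
def tropTriv {𝕜 : Type} [Field 𝕜] {m : ℕ} (g : MvPolynomial (Fin m) 𝕜) (v : Fin m → ℝ) : ℝ :=
  sInf ((fun u => dotN v u) '' (g.support : Set (Fin m →₀ ℕ)))

/-- Initial form `in_v(g)`, w.r.t. the trivial valuation on the residue field: the sum of the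
terms of `g` whose exponents `u` minimize `v·u`. -/
def initialFormTriv {𝕜 : Type} [Field 𝕜] {m : ℕ} (v : Fin m → ℝ) (g : MvPolynomial (Fin m) 𝕜) :
    MvPolynomial (Fin m) 𝕜 :=
  ∑ u ∈ g.support.filter (fun u => dotN v u = tropTriv g v), monomial u (coeff u g)

/-- Initial ideal `in_v(J) = ⟨in_v(g) : g ∈ J⟩` w.r.t. the trivial valuation. -/
def initialIdealTriv {𝕜 : Type} [Field 𝕜] {m : ℕ} (v : Fin m → ℝ)
    (J : Ideal (MvPolynomial (Fin m) 𝕜)) : Ideal (MvPolynomial (Fin m) 𝕜) :=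
  Ideal.span {h | ∃ g ∈ J, h = initialFormTriv v g}

/-- A homogeneous ideal of `R[x_0,…,x_{m-1}]`: one containing all homogeneous components of
its elements. -/
def IsHomogIdeal {R : Type} [CommSemiring R] {m : ℕ} (I : Ideal (MvPolynomial (Fin m) R)) :
    Prop :=
  ∀ f ∈ I, ∀ d : ℕ, homogeneousComponent d f ∈ I

/-- A monomial ideal: an ideal generated by monomials. -/
def IsMonomialIdeal {R : Type} [CommSemiring R] {m : ℕ} (J : Ideal (MvPolynomial (Fin m) R)) :
    Prop :=
  ∃ S : Set (Fin m →₀ ℕ), J = Ideal.span ((fun u => (monomial u 1 : MvPolynomial (Fin m) R)) '' S)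

section Aux

variable {K 𝕜 : Type} [Field K] [Field 𝕜]

lemma coeff_sum_monomial {m : ℕ} (T : Finset (Fin m →₀ ℕ)) (c : (Fin m →₀ ℕ) → 𝕜)
    (u : Fin m →₀ ℕ) :
    coeff u (∑ x ∈ T, monomial x (c x)) = if u ∈ T then c u else 0 := by
  rw [MvPolynomial.coeff_sum]
  simp [MvPolynomial.coeff_monomial]

lemma res_t_mul_ne_zero (V : ValSetup K 𝕜) {c : K} (hc : c ≠ 0) :
    V.res (V.t (-(V.val c)) * c) ≠ 0 := by
  have hinv : (c⁻¹ : K) ≠ 0 := inv_ne_zero hc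
  have hvalinv : V.val c⁻¹ = -(V.val c) := by
    have h := V.val_mul hc hinv
    rw [mul_inv_cancel₀ hc, V.val_one] at h
    linarith
  have hneg : ∃ a : K, a ≠ 0 ∧ V.val a = -(V.val c) := ⟨c⁻¹, hinv, hvalinv⟩
  have ht : V.t (-(V.val c)) ≠ 0 := V.t_ne_zero hneg
  have ha : V.t (-(V.val c)) * c ≠ 0 := mul_ne_zero ht hc
  have hval : V.val (V.t (-(V.val c)) * c) = 0 := by
    rw [V.val_mul ht hc, V.val_t hneg]; ring
  intro h
  have := (V.res_eq_zero_iff ha (le_of_eq hval.symm)).mp h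
  rw [hval] at this
  exact lt_irrefl 0 this

lemma dotN_add_smul {m : ℕ} (w v : Fin m → ℝ) (e : ℝ) (u : Fin m →₀ ℕ) :
    dotN (w + e • v) u = dotN w u + e * dotN v u := by
  simp only [dotN, Pi.add_apply, Pi.smul_apply, smul_eq_mul, add_mul, Finset.sum_add_distrib,
    Finset.mul_sum]
  ring_nf

end Aux

/-- (Lemma 3.1.)  For all `f ∈ K[x_0,…,x_n]` and `w, v ∈ Γ^{n+1}` there exists `ε > 0` such
that `in_v(in_w(f)) = in_{w+ε'v}(f)` for all `ε' ∈ Γ` with `0 < ε' < ε`. -/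
theorem initialForm_initialForm {K 𝕜 : Type} [Field K] [Field 𝕜] (V : ValSetup K 𝕜)
    {n : ℕ} (f : MvPolynomial (Fin (n+1)) K) (w v : Fin (n+1) → ℝ)
    (hw : ∀ i, w i ∈ V.Gamma) (hv : ∀ i, v i ∈ V.Gamma) :
    ∃ ε : ℝ, 0 < ε ∧ ∀ ε' : ℝ, ε' ∈ V.Gamma → 0 < ε' → ε' < ε →
      initialFormTriv v (V.initialForm w f) = V.initialForm (w + ε' • v) f := by
  classical
  by_cases hf : f = 0
  · refine ⟨1, one_pos, fun ε' _ _ _ => ?_⟩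
    subst hf
    have h0 : ∀ w' : Fin (n+1) → ℝ, V.initialForm w' (0 : MvPolynomial (Fin (n+1)) K) = 0 := fun w' =>
      Finset.sum_eq_zero (fun u _ => by simp [V.res_zero])
    rw [h0, h0]
    exact Finset.sum_eq_zero (fun u _ => by simp)
  -- notation
  set A : (Fin (n+1) →₀ ℕ) → ℝ := fun u => V.val (coeff u f) + dotN w u with hA
  set τ : ℝ := V.trop f w with hτ
  have hS : f.support.Nonempty := MvPolynomial.support_nonempty.mpr hf
  have hSet : ((fun u => A u) '' (f.support : Set (Fin (n+1) →₀ ℕ))).Finite :=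
    (f.support.finite_toSet).image _
  have hSetne : ((fun u => A u) '' (f.support : Set (Fin (n+1) →₀ ℕ))).Nonempty :=
    ⟨A hS.choose, ⟨hS.choose, hS.choose_spec, rfl⟩⟩
  have hτ_le : ∀ u ∈ f.support, τ ≤ A u := fun u hu =>
    csInf_le hSet.bddBelow ⟨u, hu, rfl⟩
  have hτ_mem : ∃ u ∈ f.support, A u = τ := by
    have := hSetne.csInf_mem hSet
    obtain ⟨u, hu, hue⟩ := this
    exact ⟨u, hu, hue⟩
  set S₀ : Finset (Fin (n+1) →₀ ℕ) :=
    f.support.filter (fun u => V.val (coeff u f) + dotN w u = V.trop f w) with hS₀def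
  set r : (Fin (n+1) →₀ ℕ) → 𝕜 :=
    fun u => V.res (V.t (-(V.val (coeff u f))) * coeff u f) with hrdef
  have hr : ∀ u ∈ f.support, r u ≠ 0 := fun u hu =>
    res_t_mul_ne_zero V (MvPolynomial.mem_support_iff.mp hu)
  set g : MvPolynomial (Fin (n+1)) 𝕜 := V.initialForm w f with hg
  have hg_coeff : ∀ u, coeff u g = if u ∈ S₀ then r u else 0 := fun u =>
    coeff_sum_monomial S₀ r u
  have hgsupp : g.support = S₀ := by
    ext u
    simp only [MvPolynomial.mem_support_iff, hg_coeff]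
    constructor
    · intro h
      by_contra hc
      simp [hc] at h
    · intro h
      have hu : u ∈ f.support := Finset.mem_filter.mp h |>.1
      simp [h, hr u hu]
  have hS₀ne : S₀.Nonempty := by
    obtain ⟨u, hu, hue⟩ := hτ_mem
    exact ⟨u, Finset.mem_filter.mpr ⟨hu, hue⟩⟩
  have hgne : g ≠ 0 := by
    intro h
    rw [h, MvPolynomial.support_zero] at hgsupp
    exact Finset.not_nonempty_empty (hgsupp ▸ hS₀ne)
  set μ : ℝ := tropTriv g v with hμ
  have hμSet : ((fun u => dotN v u) '' (g.support : Set (Fin (n+1) →₀ ℕ))).Finite :=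
    (g.support.finite_toSet).image _
  have hμSetne : ((fun u => dotN v u) '' (g.support : Set (Fin (n+1) →₀ ℕ))).Nonempty := by
    obtain ⟨u, hu⟩ := hS₀ne
    exact ⟨dotN v u, ⟨u, by rw [hgsupp]; exact hu, rfl⟩⟩
  have hμ_le : ∀ u ∈ S₀, μ ≤ dotN v u := fun u hu =>
    csInf_le hμSet.bddBelow ⟨u, by rw [hgsupp]; exact hu, rfl⟩
  have hμ_mem : ∃ u ∈ S₀, dotN v u = μ := by
    obtain ⟨x, hx, hxe⟩ := hμSetne.csInf_mem hμSet
    exact ⟨x, by rw [← hgsupp]; exact hx, hxe⟩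
  set S₁ : Finset (Fin (n+1) →₀ ℕ) := S₀.filter (fun u => dotN v u = μ) with hS₁def
  have hS₁ne : S₁.Nonempty := by
    obtain ⟨u, hu, hue⟩ := hμ_mem
    exact ⟨u, Finset.mem_filter.mpr ⟨hu, hue⟩⟩
  have hA₀ : ∀ u ∈ S₀, A u = τ := fun u hu => (Finset.mem_filter.mp hu).2
  -- choice of ε
  set T : Finset (Fin (n+1) →₀ ℕ) := f.support \ S₀ with hT
  set gf : (Fin (n+1) →₀ ℕ) → ℝ := fun u => (A u - τ) / max (μ - dotN v u) 1 with hgf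
  set E : Finset ℝ := insert (1:ℝ) (T.image gf) with hE
  have hEne : E.Nonempty := ⟨1, Finset.mem_insert_self _ _⟩
  set ε : ℝ := E.min' hEne with hεdef
  have hAgt : ∀ u ∈ T, τ < A u := by
    intro u hu
    obtain ⟨hu1, hu2⟩ := Finset.mem_sdiff.mp hu
    have : A u ≠ τ := fun h => hu2 (Finset.mem_filter.mpr ⟨hu1, h⟩)
    exact lt_of_le_of_ne (hτ_le u hu1) (Ne.symm this)
  have hgf_pos : ∀ u ∈ T, 0 < gf u := by
    intro u hu
    apply div_pos (by linarith [hAgt u hu]) (lt_of_lt_of_le one_pos (le_max_right _ _))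
  have hε_pos : 0 < ε := by
    have := E.min'_mem hEne
    rw [← hεdef] at this
    rcases Finset.mem_insert.mp this with h | h
    · rw [h]; exact one_pos
    · obtain ⟨u, hu, hue⟩ := Finset.mem_image.mp h
      rw [← hue]; exact hgf_pos u hu
  refine ⟨ε, hε_pos, fun ε' _ hε'pos hε'lt => ?_⟩
  -- key strict inequality off S₀
  have key_lt : ∀ u ∈ f.support, u ∉ S₀ → τ + ε' * μ < A u + ε' * dotN v u := by
    intro u hu hnot
    have huT : u ∈ T := Finset.mem_sdiff.mpr ⟨hu, hnot⟩
    have h1 : ε' < gf u :=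
      lt_of_lt_of_le hε'lt (E.min'_le _ (Finset.mem_insert_of_mem (Finset.mem_image_of_mem gf huT)))
    have hd : (0:ℝ) < max (μ - dotN v u) 1 := lt_of_lt_of_le one_pos (le_max_right _ _)
    have h2 : ε' * max (μ - dotN v u) 1 < A u - τ := by
      rw [← lt_div_iff₀ hd] at *
      exact h1
    have h3 : ε' * (μ - dotN v u) ≤ ε' * max (μ - dotN v u) 1 :=
      mul_le_mul_of_nonneg_left (le_max_left _ _) hε'pos.le
    nlinarith [mul_sub ε' μ (dotN v u)]
  have lower : ∀ u ∈ f.support, τ + ε' * μ ≤ A u + ε' * dotN v u := by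
    intro u hu
    by_cases h : u ∈ S₀
    · have := hμ_le u h
      have := hA₀ u h
      nlinarith
    · exact (key_lt u hu h).le
  -- the new tropical value
  have htrop' : V.trop f (w + ε' • v) = τ + ε' * μ := by
    apply le_antisymm
    · obtain ⟨u, hu⟩ := hS₁ne
      obtain ⟨hu0, hudot⟩ := Finset.mem_filter.mp hu
      have humem : u ∈ f.support := (Finset.mem_filter.mp hu0).1
      have hval : V.val (coeff u f) + dotN (w + ε' • v) u = τ + ε' * μ := by
        rw [dotN_add_smul, hudot]
        have hAu := hA₀ u hu0
        simp only [hA] at hAu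
        linarith
      exact csInf_le ((f.support.finite_toSet).image _).bddBelow ⟨u, humem, hval⟩
    · apply le_csInf
      · obtain ⟨u, hu⟩ := hS
        exact ⟨_, ⟨u, hu, rfl⟩⟩
      · rintro b ⟨u, hu, rfl⟩
        show τ + ε' * μ ≤ V.val (coeff u f) + dotN (w + ε' • v) u
        rw [dotN_add_smul, ← add_assoc]
        exact lower u hu
  -- identify the filtered sets
  have hfilter : f.support.filter
      (fun u => V.val (coeff u f) + dotN (w + ε' • v) u = V.trop f (w + ε' • v)) = S₁ := by
    ext u
    constructor
    · intro h
      obtain ⟨hu, heq⟩ := Finset.mem_filter.mp h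
      rw [htrop', dotN_add_smul, ← add_assoc] at heq
      by_cases h0 : u ∈ S₀
      · refine Finset.mem_filter.mpr ⟨h0, ?_⟩
        have hAu : A u = τ := hA₀ u h0
        simp only [hA] at hAu
        have : ε' * dotN v u = ε' * μ := by linarith
        exact mul_left_cancel₀ (ne_of_gt hε'pos) this
      · exact absurd heq (ne_of_gt (key_lt u hu h0))
    · intro h
      obtain ⟨h0, hdot⟩ := Finset.mem_filter.mp h
      have hu : u ∈ f.support := (Finset.mem_filter.mp h0).1
      refine Finset.mem_filter.mpr ⟨hu, ?_⟩
      rw [htrop', dotN_add_smul, ← add_assoc, hdot]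
      have hAu := hA₀ u h0
      simp only [hA] at hAu
      linarith
  -- identify both sides as the same sum
  have hleft : initialFormTriv v g = ∑ u ∈ S₁, monomial u (r u) := by
    rw [initialFormTriv]
    rw [hgsupp]
    apply Finset.sum_congr rfl
    intro u hu
    have h0 : u ∈ S₀ := (Finset.mem_filter.mp hu).1
    rw [hg_coeff u, if_pos h0]
  rw [hleft, ValSetup.initialForm, hfilter]
end
end

section
/- Let I ⊆ K[x_0,…,x_n] be a homogeneous ideal and w ∈ Γ^{n+1} be such that the degree-d part in_w(I)_d is spanned over k by the monomials it contains. Then the monomials of degree d not lying in in_w(I), regarded as elements of (K[x_0,…,x_n]/I)_d, form a K-basis of (K[x_0,…,x_n]/I)_d. -/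
open MvPolynomial
open scoped Classical

noncomputable section

namespace ValSetup
variable {K 𝕜 : Type} [Field K] [Field 𝕜] (V : ValSetup K 𝕜)

lemma gamma_zero : (0:ℝ) ∈ V.Gamma := ⟨1, one_ne_zero, V.val_one⟩

lemma gamma_add {r s : ℝ} (hr : r ∈ V.Gamma) (hs : s ∈ V.Gamma) : r + s ∈ V.Gamma := by
  obtain ⟨a, ha, rfl⟩ := hr; obtain ⟨b, hb, rfl⟩ := hs
  exact ⟨a * b, mul_ne_zero ha hb, V.val_mul ha hb⟩

lemma val_inv {a : K} (ha : a ≠ 0) : V.val a⁻¹ = -V.val a := by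
  have h := V.val_mul ha (inv_ne_zero ha)
  rw [mul_inv_cancel₀ ha, V.val_one] at h
  linarith

lemma gamma_neg {r : ℝ} (hr : r ∈ V.Gamma) : -r ∈ V.Gamma := by
  obtain ⟨a, ha, rfl⟩ := hr
  exact ⟨a⁻¹, inv_ne_zero ha, V.val_inv ha⟩

lemma gamma_sub {r s : ℝ} (hr : r ∈ V.Gamma) (hs : s ∈ V.Gamma) : r - s ∈ V.Gamma := by
  have := V.gamma_add hr (V.gamma_neg hs); simpa [sub_eq_add_neg] using this

lemma gamma_nsmul {r : ℝ} (hr : r ∈ V.Gamma) (k : ℕ) : (k : ℝ) * r ∈ V.Gamma := by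
  induction k with
  | zero => simpa using V.gamma_zero
  | succ k ih =>
      have := V.gamma_add ih hr
      convert this using 1
      push_cast; ring

lemma dotN_mem {m : ℕ} {w : Fin m → ℝ} (hw : ∀ i, w i ∈ V.Gamma) (u : Fin m →₀ ℕ) :
    dotN w u ∈ V.Gamma := by
  unfold dotN
  classical
  induction (Finset.univ : Finset (Fin m)) using Finset.induction with
  | empty => simpa using V.gamma_zero
  | insert _ _ h ih =>
      rw [Finset.sum_insert h]
      exact V.gamma_add (by rw [mul_comm]; exact V.gamma_nsmul (hw _) _) ih

lemma t_ne_zero' {r : ℝ} (hr : r ∈ V.Gamma) : V.t r ≠ 0 := V.t_ne_zero hr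

lemma t_zero : V.t 0 = 1 := by
  have h := V.t_add V.gamma_zero V.gamma_zero
  rw [add_zero] at h
  have h0 : V.t 0 ≠ 0 := V.t_ne_zero' V.gamma_zero
  field_simp at h
  tauto

lemma val_t' {r : ℝ} (hr : r ∈ V.Gamma) : V.val (V.t r) = r := V.val_t hr

/-- reduction of `t (-val a) * a` is nonzero, for `a ≠ 0`. -/
lemma res_unit {a : K} (ha : a ≠ 0) : V.res (V.t (-V.val a) * a) ≠ 0 := by
  have hΓ : -V.val a ∈ V.Gamma := V.gamma_neg ⟨a, ha, rfl⟩
  have ht : V.t (-V.val a) ≠ 0 := V.t_ne_zero' hΓ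
  have hne : V.t (-V.val a) * a ≠ 0 := mul_ne_zero ht ha
  have hv : V.val (V.t (-V.val a) * a) = 0 := by
    rw [V.val_mul ht ha, V.val_t' hΓ]; ring
  intro h0
  have := (V.res_eq_zero_iff hne hv.ge).1 h0
  rw [hv] at this
  exact lt_irrefl 0 this

lemma res_eq_zero_of_pos {a : K} (ha : a ≠ 0) (h : 0 < V.val a) : V.res a = 0 :=
  (V.res_eq_zero_iff ha h.le).2 h

/-- lift of a nonzero residue element to a unit of the valuation ring. -/
lemma exists_lift {c : 𝕜} (hc : c ≠ 0) : ∃ a : K, a ≠ 0 ∧ V.val a = 0 ∧ V.res a = c := by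
  obtain ⟨a, ha, hres⟩ := V.res_surjective c
  have ha0 : a ≠ 0 := by rintro rfl; rw [V.res_zero] at hres; exact hc hres.symm
  have hge : 0 ≤ V.val a := ha.resolve_left ha0
  refine ⟨a, ha0, ?_, hres⟩
  by_contra h
  have : 0 < V.val a := lt_of_le_of_ne hge (Ne.symm h)
  exact hc (hres ▸ V.res_eq_zero_of_pos ha0 this)

lemma t_mul_t {r s : ℝ} (hr : r ∈ V.Gamma) (hs : s ∈ V.Gamma) :
    V.t r * V.t s = V.t (r + s) := (V.t_add hr hs).symm

end ValSetup

section Aux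
variable {K 𝕜 : Type} [Field K] [Field 𝕜] (V : ValSetup K 𝕜) {m : ℕ} (w : Fin m → ℝ)

lemma dotN_add (u v : Fin m →₀ ℕ) : dotN w (u + v) = dotN w u + dotN w v := by
  unfold dotN
  rw [← Finset.sum_add_distrib]
  refine Finset.sum_congr rfl fun i _ => ?_
  rw [Finsupp.add_apply]
  push_cast; ring

lemma dotN_sub {u v : Fin m →₀ ℕ} (h : v ≤ u) : dotN w (u - v) = dotN w u - dotN w v := by
  have : v + (u - v) = u := add_tsub_cancel_of_le h
  have h2 := dotN_add w v (u - v)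
  rw [this] at h2
  linarith

/-- Predicate: all coefficients of `f` have `val + w·u ≥ τ`. -/
def LBp (τ : ℝ) (f : MvPolynomial (Fin m) K) : Prop :=
  ∀ u, coeff u f = 0 ∨ τ ≤ V.val (coeff u f) + dotN w u

/-- Coefficientwise reduction at level `τ`. -/
def red (τ : ℝ) (f : MvPolynomial (Fin m) K) : MvPolynomial (Fin m) 𝕜 :=
  ∑ u ∈ f.support, monomial u (V.res (V.t (dotN w u - τ) * coeff u f))

lemma coeff_red (τ : ℝ) (f : MvPolynomial (Fin m) K) (u : Fin m →₀ ℕ) :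
    coeff u (red V w τ f) = V.res (V.t (dotN w u - τ) * coeff u f) := by
  classical
  unfold red
  rw [coeff_sum]
  simp only [coeff_monomial]
  rw [Finset.sum_ite_eq' f.support u]
  split_ifs with h
  · rfl
  · rw [MvPolynomial.notMem_support_iff] at h
    rw [h, mul_zero, V.res_zero]

variable {V w}
variable (hw : ∀ i, w i ∈ V.Gamma)

lemma trop_le {f : MvPolynomial (Fin m) K} {u : Fin m →₀ ℕ} (hu : u ∈ f.support) :
    V.trop f w ≤ V.val (coeff u f) + dotN w u := by
  refine csInf_le ((f.support.finite_toSet.image _).bddBelow) ⟨u, hu, rfl⟩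

lemma exists_trop {f : MvPolynomial (Fin m) K} (hf : f ≠ 0) :
    ∃ u ∈ f.support, V.val (coeff u f) + dotN w u = V.trop f w := by
  have hne : ((fun u => V.val (coeff u f) + dotN w u) '' (f.support : Set (Fin m →₀ ℕ))).Nonempty :=
    Set.Nonempty.image _ (by simpa using MvPolynomial.support_nonempty.2 hf)
  have := Set.Nonempty.csInf_mem hne (f.support.finite_toSet.image _)
  obtain ⟨u, hu, heq⟩ := this
  exact ⟨u, hu, heq⟩

include hw in
lemma trop_mem {f : MvPolynomial (Fin m) K} (hf : f ≠ 0) : V.trop f w ∈ V.Gamma := by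
  obtain ⟨u, hu, heq⟩ := exists_trop (V := V) (w := w) hf
  rw [← heq]
  exact V.gamma_add ⟨_, MvPolynomial.mem_support_iff.1 hu, rfl⟩ (V.dotN_mem hw u)

lemma LBp_zero (τ : ℝ) : LBp V w τ 0 := fun u => Or.inl (by simp)

lemma LBp_of_trop {f : MvPolynomial (Fin m) K} : LBp V w (V.trop f w) f := by
  intro u
  by_cases h : coeff u f = 0
  · exact Or.inl h
  · exact Or.inr (trop_le (MvPolynomial.mem_support_iff.2 h))

lemma LBp_add {τ : ℝ} {f g : MvPolynomial (Fin m) K} (hf : LBp V w τ f) (hg : LBp V w τ g) :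
    LBp V w τ (f + g) := by
  intro u
  rw [coeff_add]
  by_cases hfu : coeff u f = 0
  · rcases hg u with h2 | h2
    · exact Or.inl (by rw [hfu, h2, add_zero])
    · exact Or.inr (by rw [hfu, zero_add]; exact h2)
  by_cases hgu : coeff u g = 0
  · right
    rw [hgu, add_zero]
    exact (hf u).resolve_left hfu
  by_cases hs : coeff u f + coeff u g = 0
  · exact Or.inl hs
  right
  have h1 := (hf u).resolve_left hfu
  have h2 := (hg u).resolve_left hgu
  have hmin := V.val_add hfu hgu hs
  rcases le_total (V.val (coeff u f)) (V.val (coeff u g)) with hle | hle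
  · rw [min_eq_left hle] at hmin; linarith
  · rw [min_eq_right hle] at hmin; linarith

lemma LBp_sum {τ : ℝ} {ι : Type*} (s : Finset ι) (f : ι → MvPolynomial (Fin m) K)
    (h : ∀ i ∈ s, LBp V w τ (f i)) : LBp V w τ (∑ i ∈ s, f i) := by
  classical
  induction s using Finset.induction with
  | empty => simpa using LBp_zero τ
  | @insert a s ha ih =>
      rw [Finset.sum_insert ha]
      exact LBp_add (h a (Finset.mem_insert_self a s))
        (ih fun i hi => h i (Finset.mem_insert_of_mem hi))

lemma LBp_smul {τ : ℝ} {c : K} (hc : c ≠ 0) {f : MvPolynomial (Fin m) K} (hf : LBp V w τ f) :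
    LBp V w (τ + V.val c) (c • f) := by
  intro u
  rw [MvPolynomial.coeff_smul, smul_eq_mul]
  by_cases h : coeff u f = 0
  · exact Or.inl (by rw [h, mul_zero])
  right
  rw [V.val_mul hc h]
  rcases hf u with h1 | h1
  · exact absurd h1 h
  linarith

lemma LBp_mono {σ τ : ℝ} (hστ : σ ≤ τ) {f : MvPolynomial (Fin m) K} (hf : LBp V w τ f) :
    LBp V w σ f := fun u => (hf u).imp id (le_trans hστ)

lemma LBp_monomial_mul {τ : ℝ} (v : Fin m →₀ ℕ) {f : MvPolynomial (Fin m) K}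
    (hf : LBp V w τ f) : LBp V w (τ + dotN w v) (monomial v (1 : K) * f) := by
  intro u
  rw [coeff_monomial_mul']
  split_ifs with h
  · rw [one_mul]
    rcases hf (u - v) with h1 | h1
    · exact Or.inl h1
    · right
      have := dotN_sub w h
      linarith
  · exact Or.inl rfl

lemma LBp_homogComponent {τ : ℝ} (d : ℕ) {f : MvPolynomial (Fin m) K} (hf : LBp V w τ f) :
    LBp V w τ (homogeneousComponent d f) := by
  intro u
  rw [coeff_homogeneousComponent]
  split_ifs with h
  · exact hf u
  · exact Or.inl rfl

end Aux

section Aux2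
variable {K 𝕜 : Type} [Field K] [Field 𝕜] {V : ValSetup K 𝕜} {m : ℕ} {w : Fin m → ℝ}
variable (hw : ∀ i, w i ∈ V.Gamma)

include hw in
lemma red_arg {τ : ℝ} (hτ : τ ∈ V.Gamma) (u : Fin m →₀ ℕ) {c : K}
    (h : c = 0 ∨ τ ≤ V.val c + dotN w u) :
    V.t (dotN w u - τ) * c = 0 ∨ 0 ≤ V.val (V.t (dotN w u - τ) * c) := by
  by_cases hc : c = 0
  · exact Or.inl (by rw [hc, mul_zero])
  have h' := h.resolve_left hc
  right
  have hΓ : dotN w u - τ ∈ V.Gamma := V.gamma_sub (V.dotN_mem hw u) hτ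
  rw [V.val_mul (V.t_ne_zero' hΓ) hc, V.val_t' hΓ]
  linarith

lemma red_zero (τ : ℝ) : red V w τ (0 : MvPolynomial (Fin m) K) = 0 := by
  ext u
  rw [coeff_red]
  simp [V.res_zero]

include hw in
lemma red_add {τ : ℝ} (hτ : τ ∈ V.Gamma) {f g : MvPolynomial (Fin m) K}
    (hf : LBp V w τ f) (hg : LBp V w τ g) :
    red V w τ (f + g) = red V w τ f + red V w τ g := by
  ext u
  rw [coeff_add, coeff_red, coeff_red, coeff_red, coeff_add, mul_add]
  exact V.res_add (red_arg hw hτ u (hf u)) (red_arg hw hτ u (hg u))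

include hw in
lemma red_sum {τ : ℝ} (hτ : τ ∈ V.Gamma) {ι : Type*} (s : Finset ι)
    (f : ι → MvPolynomial (Fin m) K) (h : ∀ i ∈ s, LBp V w τ (f i)) :
    red V w τ (∑ i ∈ s, f i) = ∑ i ∈ s, red V w τ (f i) := by
  classical
  induction s using Finset.induction with
  | empty => simpa using red_zero τ
  | @insert a s ha ih =>
      rw [Finset.sum_insert ha, Finset.sum_insert ha,
        red_add hw hτ (h a (Finset.mem_insert_self a s))
          (LBp_sum s f fun i hi => h i (Finset.mem_insert_of_mem hi)),
        ih fun i hi => h i (Finset.mem_insert_of_mem hi)]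

include hw in
lemma red_smul {τ : ℝ} (hτ : τ ∈ V.Gamma) {c : K} (hc : c ≠ 0) {f : MvPolynomial (Fin m) K}
    (hf : LBp V w τ f) :
    red V w (τ + V.val c) (c • f) = V.res (V.t (-V.val c) * c) • red V w τ f := by
  have hcΓ : V.val c ∈ V.Gamma := ⟨c, hc, rfl⟩
  ext u
  rw [MvPolynomial.coeff_smul, coeff_red, coeff_red, MvPolynomial.coeff_smul,
    smul_eq_mul, smul_eq_mul]
  by_cases h0 : coeff u f = 0
  · simp [h0, V.res_zero]
  have hΓ1 : -V.val c ∈ V.Gamma := V.gamma_neg hcΓ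
  have hΓ2 : dotN w u - τ ∈ V.Gamma := V.gamma_sub (V.dotN_mem hw u) hτ
  have hsplit : V.t (dotN w u - (τ + V.val c)) = V.t (-V.val c) * V.t (dotN w u - τ) := by
    rw [V.t_mul_t hΓ1 hΓ2]
    congr 1
    ring
  rw [hsplit]
  have : V.t (-V.val c) * V.t (dotN w u - τ) * (c * coeff u f)
      = (V.t (-V.val c) * c) * (V.t (dotN w u - τ) * coeff u f) := by ring
  rw [this]
  refine V.res_mul ?_ (red_arg hw hτ u (hf u))
  right
  have : V.val (V.t (-V.val c) * c) = 0 := by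
    rw [V.val_mul (V.t_ne_zero' hΓ1) hc, V.val_t' hΓ1]; ring
  rw [this]

include hw in
lemma red_shift {τ : ℝ} (a : ℝ) (ha : a ∈ V.Gamma) (hτ : τ ∈ V.Gamma)
    (f : MvPolynomial (Fin m) K) :
    red V w (τ + a) (V.t a • f) = red V w τ f := by
  ext u
  rw [coeff_red, coeff_red, MvPolynomial.coeff_smul, smul_eq_mul]
  have hΓ2 : dotN w u - τ ∈ V.Gamma := V.gamma_sub (V.dotN_mem hw u) hτ
  have hΓ3 : dotN w u - (τ + a) ∈ V.Gamma := V.gamma_sub (V.dotN_mem hw u) (V.gamma_add hτ ha)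
  have : V.t (dotN w u - (τ + a)) * (V.t a * coeff u f) = V.t (dotN w u - τ) * coeff u f := by
    rw [← mul_assoc, V.t_mul_t hΓ3 ha]
    congr 2
    ring
  rw [this]

include hw in
lemma red_monomial_mul {τ : ℝ} (v : Fin m →₀ ℕ) (f : MvPolynomial (Fin m) K) :
    red V w (τ + dotN w v) (monomial v (1 : K) * f) = monomial v (1 : 𝕜) * red V w τ f := by
  ext u
  rw [coeff_red, coeff_monomial_mul', coeff_monomial_mul']
  split_ifs with h
  · rw [one_mul, one_mul, coeff_red, dotN_sub w h]
    congr 2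
    ring
  · rw [mul_zero, V.res_zero]

include hw in
lemma red_coeff_ne_zero {τ : ℝ} (hτ : τ ∈ V.Gamma) {f : MvPolynomial (Fin m) K}
    {u : Fin m →₀ ℕ} (h : coeff u (red V w τ f) ≠ 0) :
    coeff u f ≠ 0 ∧ V.val (coeff u f) + dotN w u ≤ τ := by
  rw [coeff_red] at h
  have hΓ : dotN w u - τ ∈ V.Gamma := V.gamma_sub (V.dotN_mem hw u) hτ
  have hfu : coeff u f ≠ 0 := by
    rintro h0
    rw [h0, mul_zero, V.res_zero] at h
    exact h rfl
  refine ⟨hfu, ?_⟩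
  by_contra hgt
  push_neg at hgt
  have hne : V.t (dotN w u - τ) * coeff u f ≠ 0 := mul_ne_zero (V.t_ne_zero' hΓ) hfu
  have hval : V.val (V.t (dotN w u - τ) * coeff u f) = V.val (coeff u f) + dotN w u - τ := by
    rw [V.val_mul (V.t_ne_zero' hΓ) hfu, V.val_t' hΓ]; ring
  exact h (V.res_eq_zero_of_pos hne (by rw [hval]; linarith))

lemma coeff_initialForm (f : MvPolynomial (Fin m) K) (u : Fin m →₀ ℕ) :
    coeff u (V.initialForm w f)
      = if u ∈ f.support ∧ V.val (coeff u f) + dotN w u = V.trop f w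
        then V.res (V.t (-(V.val (coeff u f))) * coeff u f) else 0 := by
  classical
  unfold ValSetup.initialForm
  rw [coeff_sum]
  simp only [coeff_monomial]
  rw [Finset.sum_ite_eq' _ u]
  by_cases hmem : u ∈ f.support ∧ V.val (coeff u f) + dotN w u = V.trop f w
  · rw [if_pos (Finset.mem_filter.2 hmem), if_pos hmem]
  · rw [if_neg (fun h => hmem (Finset.mem_filter.1 h)), if_neg hmem]

include hw in
lemma red_trop {f : MvPolynomial (Fin m) K} (hf : f ≠ 0) :
    red V w (V.trop f w) f = V.initialForm w f := by
  have hτ : V.trop f w ∈ V.Gamma := trop_mem hw hf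
  ext u
  rw [coeff_red, coeff_initialForm]
  by_cases h0 : coeff u f = 0
  · rw [h0, mul_zero, V.res_zero, if_neg]
    rintro ⟨hu, -⟩
    exact MvPolynomial.mem_support_iff.1 hu h0
  have hu : u ∈ f.support := MvPolynomial.mem_support_iff.2 h0
  by_cases he : V.val (coeff u f) + dotN w u = V.trop f w
  · rw [if_pos ⟨hu, he⟩]
    have heq : dotN w u - V.trop f w = -(V.val (coeff u f)) := by linarith
    rw [heq]
  · rw [if_neg (by tauto)]
    have hlt : V.trop f w < V.val (coeff u f) + dotN w u :=
      lt_of_le_of_ne (trop_le hu) (Ne.symm he)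
    have hΓ : dotN w u - V.trop f w ∈ V.Gamma := V.gamma_sub (V.dotN_mem hw u) hτ
    have hne : V.t (dotN w u - V.trop f w) * coeff u f ≠ 0 :=
      mul_ne_zero (V.t_ne_zero' hΓ) h0
    refine V.res_eq_zero_of_pos hne ?_
    rw [V.val_mul (V.t_ne_zero' hΓ) h0, V.val_t' hΓ]
    linarith

include hw in
lemma red_eq_initialForm {τ : ℝ} (hτ : τ ∈ V.Gamma) {f : MvPolynomial (Fin m) K}
    (hLB : LBp V w τ f) (hne : red V w τ f ≠ 0) :
    f ≠ 0 ∧ V.trop f w = τ ∧ red V w τ f = V.initialForm w f := by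
  obtain ⟨u, hu⟩ : ∃ u, coeff u (red V w τ f) ≠ 0 := by
    by_contra h
    push_neg at h
    exact hne (MvPolynomial.eq_zero_iff.2 h)
  obtain ⟨hfu, hle⟩ := red_coeff_ne_zero hw hτ hu
  have hf : f ≠ 0 := fun h => hfu (by rw [h]; simp)
  have h1 : V.trop f w ≤ τ := le_trans (trop_le (MvPolynomial.mem_support_iff.2 hfu)) hle
  have h2 : τ ≤ V.trop f w := by
    obtain ⟨v, hv, hveq⟩ := exists_trop (V := V) (w := w) hf
    rw [← hveq]
    exact ((hLB v).resolve_left (MvPolynomial.mem_support_iff.1 hv)).trans (le_refl _)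
  have htrop : V.trop f w = τ := le_antisymm h1 h2
  refine ⟨hf, htrop, ?_⟩
  rw [← htrop]
  exact red_trop hw hf

include hw in
lemma initialForm_ne_zero {f : MvPolynomial (Fin m) K} (hf : f ≠ 0) :
    V.initialForm w f ≠ 0 := by
  obtain ⟨u, hu, heq⟩ := exists_trop (V := V) (w := w) hf
  intro h
  have := coeff_initialForm (V := V) (w := w) f u
  rw [h, if_pos ⟨hu, heq⟩] at this
  exact V.res_unit (MvPolynomial.mem_support_iff.1 hu) this.symm

lemma initialForm_coeff_ne_zero {f : MvPolynomial (Fin m) K} {u : Fin m →₀ ℕ}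
    (h : coeff u (V.initialForm w f) ≠ 0) : coeff u f ≠ 0 := by
  rw [coeff_initialForm] at h
  by_cases hc : coeff u f = 0
  · rw [if_neg (by rintro ⟨hu, -⟩; exact (MvPolynomial.mem_support_iff.1 hu) hc)] at h
    exact absurd rfl h
  · exact hc

lemma red_homogComponent (τ : ℝ) (d : ℕ) (f : MvPolynomial (Fin m) K) :
    homogeneousComponent d (red V w τ f) = red V w τ (homogeneousComponent d f) := by
  ext u
  rw [coeff_homogeneousComponent, coeff_red, coeff_red, coeff_homogeneousComponent]
  split_ifs with h
  · rfl
  · rw [mul_zero, V.res_zero]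

end Aux2

section Aux3
variable {K 𝕜 : Type} [Field K] [Field 𝕜] {V : ValSetup K 𝕜} {m : ℕ} {w : Fin m → ℝ}

lemma degree_eq_sum (u : Fin m →₀ ℕ) : (u.sum fun _ e => e) = u.degree := rfl

lemma smul_mem_ideal {I : Ideal (MvPolynomial (Fin m) K)} (c : K)
    {f : MvPolynomial (Fin m) K} (hf : f ∈ I) : c • f ∈ I := by
  rw [MvPolynomial.smul_eq_C_mul]
  exact I.mul_mem_left _ hf

lemma isHomog_iff {φ : MvPolynomial (Fin m) K} {n : ℕ} :
    φ.IsHomogeneous n ↔ ∀ u, coeff u φ ≠ 0 → u.degree = n := by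
  constructor
  · intro h u hu
    rw [Finsupp.degree_eq_weight_one]
    exact h hu
  · intro h u hu
    have := h u hu
    rw [Finsupp.degree_eq_weight_one] at this
    exact this

variable (V w) in
/-- The set of reductions at admissible levels of degree-`d`-supported elements of `I`. -/
def SdSet (I : Ideal (MvPolynomial (Fin m) K)) (d : ℕ) : Set (MvPolynomial (Fin m) 𝕜) :=
  {g | ∃ f τ, f ∈ I ∧ (∀ u : Fin m →₀ ℕ, coeff u f ≠ 0 → u.degree = d) ∧ τ ∈ V.Gamma ∧
    LBp V w τ f ∧ g = red V w τ f}

variable (hw : ∀ i, w i ∈ V.Gamma)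

lemma SdSet_zero (I : Ideal (MvPolynomial (Fin m) K)) (d : ℕ) : (0 : MvPolynomial (Fin m) 𝕜) ∈ SdSet V w I d :=
  ⟨0, 0, I.zero_mem, fun u hu => absurd (coeff_zero u) hu, V.gamma_zero, LBp_zero 0,
    (red_zero 0).symm⟩

include hw in
lemma SdSet_add (I : Ideal (MvPolynomial (Fin m) K)) (d : ℕ)
    {g₁ g₂ : MvPolynomial (Fin m) 𝕜} (h₁ : g₁ ∈ SdSet V w I d) (h₂ : g₂ ∈ SdSet V w I d) :
    g₁ + g₂ ∈ SdSet V w I d := by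
  obtain ⟨f₁, τ₁, hf₁I, hf₁d, hτ₁, hLB₁, rfl⟩ := h₁
  obtain ⟨f₂, τ₂, hf₂I, hf₂d, hτ₂, hLB₂, rfl⟩ := h₂
  have haΓ : τ₁ - τ₂ ∈ V.Gamma := V.gamma_sub hτ₁ hτ₂
  set a := τ₁ - τ₂ with ha
  set f₂' : MvPolynomial (Fin m) K := V.t a • f₂ with hf₂'
  have hta : V.t a ≠ 0 := V.t_ne_zero' haΓ
  have hred₂ : red V w τ₁ f₂' = red V w τ₂ f₂ := by
    have := red_shift hw a haΓ hτ₂ f₂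
    rwa [show τ₂ + a = τ₁ by rw [ha]; ring] at this
  have hLB₂' : LBp V w τ₁ f₂' := by
    intro u
    rw [hf₂', MvPolynomial.coeff_smul, smul_eq_mul]
    rcases hLB₂ u with h | h
    · exact Or.inl (by rw [h, mul_zero])
    by_cases h0 : coeff u f₂ = 0
    · exact Or.inl (by rw [h0, mul_zero])
    right
    rw [V.val_mul hta h0, V.val_t' haΓ]
    rw [ha]
    linarith
  refine ⟨f₁ + f₂', τ₁, I.add_mem hf₁I (smul_mem_ideal _ hf₂I), ?_, hτ₁,
    LBp_add hLB₁ hLB₂', ?_⟩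
  · intro u hu
    rw [coeff_add] at hu
    by_cases h0 : coeff u f₁ = 0
    · rw [h0, zero_add] at hu
      rw [hf₂', MvPolynomial.coeff_smul, smul_eq_mul] at hu
      exact hf₂d u fun hz => hu (by rw [hz, mul_zero])
    · exact hf₁d u h0
  · rw [red_add hw hτ₁ hLB₁ hLB₂', hred₂]

include hw in
lemma SdSet_smul (I : Ideal (MvPolynomial (Fin m) K)) (d : ℕ) (c : 𝕜)
    {g : MvPolynomial (Fin m) 𝕜} (hg : g ∈ SdSet V w I d) : c • g ∈ SdSet V w I d := by
  obtain ⟨f, τ, hfI, hfd, hτ, hLB, rfl⟩ := hg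
  by_cases hc : c = 0
  · rw [hc, zero_smul]
    exact SdSet_zero I d
  obtain ⟨a, ha0, hva, hres⟩ := V.exists_lift hc
  have hred : red V w τ (a • f) = c • red V w τ f := by
    have h1 := red_smul hw hτ ha0 hLB
    rw [hva, add_zero, neg_zero, V.t_zero, one_mul, hres] at h1
    exact h1
  refine ⟨a • f, τ, smul_mem_ideal _ hfI, ?_, hτ, ?_, hred.symm⟩
  · intro u hu
    rw [MvPolynomial.coeff_smul, smul_eq_mul] at hu
    exact hfd u fun hz => hu (by rw [hz, mul_zero])
  · have := LBp_smul ha0 hLB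
    rwa [hva, add_zero] at this
end Aux3

section Aux4
variable {K 𝕜 : Type} [Field K] [Field 𝕜] {V : ValSetup K 𝕜} {m : ℕ} {w : Fin m → ℝ}

lemma initialForm_zero : V.initialForm w (0 : MvPolynomial (Fin m) K) = 0 := by
  unfold ValSetup.initialForm
  refine Finset.sum_eq_zero fun u hu => ?_
  rw [coeff_zero, mul_zero, V.res_zero, monomial_zero]

variable (V w) in
/-- Reductions of arbitrary elements of `I`. -/
def RSet (I : Ideal (MvPolynomial (Fin m) K)) : Set (MvPolynomial (Fin m) 𝕜) :=
  {g | ∃ f τ, f ∈ I ∧ τ ∈ V.Gamma ∧ LBp V w τ f ∧ g = red V w τ f}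

variable (hw : ∀ i, w i ∈ V.Gamma) (I : Ideal (MvPolynomial (Fin m) K))

include hw in
lemma monomial_mul_mem_spanR (v : Fin m →₀ ℕ) (c : 𝕜) {g : MvPolynomial (Fin m) 𝕜}
    (hg : g ∈ Submodule.span 𝕜 (RSet V w I)) :
    monomial v c * g ∈ Submodule.span 𝕜 (RSet V w I) := by
  induction hg using Submodule.span_induction with
  | mem x hx =>
      obtain ⟨f, τ, hfI, hτ, hLB, rfl⟩ := hx
      have key : monomial v c * red V w τ f
          = c • red V w (τ + dotN w v) (monomial v (1:K) * f) := by
        rw [red_monomial_mul hw v f]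
        rw [MvPolynomial.smul_eq_C_mul, ← mul_assoc, MvPolynomial.C_mul_monomial, mul_one]
      rw [key]
      refine Submodule.smul_mem _ _ (Submodule.subset_span ?_)
      exact ⟨monomial v (1:K) * f, τ + dotN w v, I.mul_mem_left _ hfI,
        V.gamma_add hτ (V.dotN_mem hw v), LBp_monomial_mul v hLB, rfl⟩
  | zero => rw [mul_zero]; exact Submodule.zero_mem _
  | add x y hx hy ihx ihy => rw [mul_add]; exact Submodule.add_mem _ ihx ihy
  | smul a x hx ih => rw [mul_smul_comm]; exact Submodule.smul_mem _ _ ih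

include hw in
lemma mul_mem_spanR (a : MvPolynomial (Fin m) 𝕜) {g : MvPolynomial (Fin m) 𝕜}
    (hg : g ∈ Submodule.span 𝕜 (RSet V w I)) :
    a * g ∈ Submodule.span 𝕜 (RSet V w I) := by
  rw [a.as_sum, Finset.sum_mul]
  exact Submodule.sum_mem _ fun v hv => monomial_mul_mem_spanR hw I v _ hg

include hw in
lemma initialIdeal_le_spanR {g : MvPolynomial (Fin m) 𝕜} (hg : g ∈ V.initialIdeal w I) :
    g ∈ Submodule.span 𝕜 (RSet V w I) := by
  unfold ValSetup.initialIdeal at hg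
  induction hg using Submodule.span_induction with
  | mem x hx =>
      obtain ⟨f, hfI, rfl⟩ := hx
      by_cases hf : f = 0
      · rw [hf, initialForm_zero]
        exact Submodule.zero_mem _
      · refine Submodule.subset_span ⟨f, V.trop f w, hfI, trop_mem hw hf, LBp_of_trop, ?_⟩
        rw [red_trop hw hf]
  | zero => exact Submodule.zero_mem _
  | add x y hx hy ihx ihy => exact Submodule.add_mem _ ihx ihy
  | smul a x hx ih => rw [smul_eq_mul]; exact mul_mem_spanR hw I a ih

include hw in
lemma mem_SdSet_of_initialIdeal (hI : IsHomogIdeal I) {d : ℕ} {g : MvPolynomial (Fin m) 𝕜}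
    (hgI : g ∈ V.initialIdeal w I) (hgh : g.IsHomogeneous d) : g ∈ SdSet V w I d := by
  have h1 : g ∈ Submodule.span 𝕜 (RSet V w I) := initialIdeal_le_spanR hw I hgI
  have h2 : homogeneousComponent d g ∈ SdSet V w I d := by
    clear hgI hgh
    induction h1 using Submodule.span_induction with
    | mem x hx =>
        obtain ⟨f, τ, hfI, hτ, hLB, rfl⟩ := hx
        rw [red_homogComponent τ d f]
        refine ⟨homogeneousComponent d f, τ, hI f hfI d, ?_, hτ, LBp_homogComponent d hLB, rfl⟩
        intro u hu
        rw [coeff_homogeneousComponent] at hu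
        by_cases h : u.degree = d
        · exact h
        · rw [if_neg h] at hu; exact absurd rfl hu
    | zero => rw [map_zero]; exact SdSet_zero I d
    | add x y hx hy ihx ihy => rw [map_add]; exact SdSet_add hw I d ihx ihy
    | smul a x hx ih => rw [map_smul]; exact SdSet_smul hw I d a ih
  rwa [homogeneousComponent_of_mem ((mem_homogeneousSubmodule d g).2 hgh), if_pos rfl] at h2

end Aux4

section Aux5
variable {K 𝕜 : Type} [Field K] [Field 𝕜] {V : ValSetup K 𝕜} {m : ℕ} {w : Fin m → ℝ}

lemma apply_le_degree (u : Fin m →₀ ℕ) (i : Fin m) : u i ≤ u.degree := by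
  by_cases h : u i = 0
  · rw [h]; exact Nat.zero_le _
  · exact Finset.single_le_sum (fun j _ => Nat.zero_le (u j))
      (Finsupp.mem_support_iff.2 h)

lemma finite_of_degree_cond {d : ℕ} (P : (Fin m →₀ ℕ) → Prop)
    (h : ∀ u, P u → u.degree = d) : Finite {u : Fin m →₀ ℕ // P u} := by
  have hinj : Function.Injective
      (fun u : {u : Fin m →₀ ℕ // P u} => fun i => (⟨u.1 i, by
        have := apply_le_degree u.1 i
        rw [h u.1 u.2] at this
        exact Nat.lt_succ_of_le this⟩ : Fin (d+1))) := by
    intro u v huv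
    ext i
    have := congrFun huv i
    simpa using congrArg Fin.val this
  exact Finite.of_injective _ hinj

variable (hw : ∀ i, w i ∈ V.Gamma)

include hw in
lemma red_lower {σ τ : ℝ} (hσ : σ ∈ V.Gamma) (hτ : τ ∈ V.Gamma) (hστ : σ ≤ τ)
    {f : MvPolynomial (Fin m) K} (hLB : LBp V w τ f) :
    red V w σ f = V.res (V.t (τ - σ)) • red V w τ f := by
  have hΓ1 : τ - σ ∈ V.Gamma := V.gamma_sub hτ hσ
  ext u
  rw [MvPolynomial.coeff_smul, coeff_red, coeff_red, smul_eq_mul]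
  by_cases h0 : coeff u f = 0
  · simp [h0, V.res_zero]
  have hΓ2 : dotN w u - τ ∈ V.Gamma := V.gamma_sub (V.dotN_mem hw u) hτ
  have hsplit : V.t (dotN w u - σ) = V.t (τ - σ) * V.t (dotN w u - τ) := by
    rw [V.t_mul_t hΓ1 hΓ2]
    congr 1
    ring
  rw [hsplit, mul_assoc]
  refine V.res_mul ?_ (red_arg hw hτ u (hLB u))
  right
  rw [V.val_t' hΓ1]
  linarith

include hw in
lemma lifts_linearIndependent {ι' : Type*} (uf : ι' → (Fin m →₀ ℕ))
    (huinj : Function.Injective uf) (F : ι' → MvPolynomial (Fin m) K) (τ : ι' → ℝ)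
    (hτ : ∀ i, τ i ∈ V.Gamma) (hLB : ∀ i, LBp V w (τ i) (F i))
    (hred : ∀ i, red V w (τ i) (F i) = monomial (uf i) (1 : 𝕜)) :
    LinearIndependent K F := by
  classical
  rw [linearIndependent_iff']
  intro s g hsum i hi
  by_contra hgi
  set sne := s.filter (fun j => g j ≠ 0) with hsne
  have hine : i ∈ sne := Finset.mem_filter.2 ⟨hi, hgi⟩
  have hnonempty : sne.Nonempty := ⟨i, hine⟩
  set lvl : ι' → ℝ := fun j => τ j + V.val (g j) with hlvl
  have himg : (sne.image lvl).Nonempty := hnonempty.image lvl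
  set σmin : ℝ := (sne.image lvl).min' himg with hσmin
  obtain ⟨j₀, hj₀, hj₀eq⟩ := Finset.mem_image.1 ((sne.image lvl).min'_mem himg)
  have hgj₀ : g j₀ ≠ 0 := (Finset.mem_filter.1 hj₀).2
  have hσΓ : σmin ∈ V.Gamma := by
    rw [hσmin, ← hj₀eq]
    exact V.gamma_add (hτ j₀) ⟨g j₀, hgj₀, rfl⟩
  have hσle : ∀ j ∈ sne, σmin ≤ lvl j := fun j hj =>
    (sne.image lvl).min'_le _ (Finset.mem_image_of_mem lvl hj)
  have hsum' : ∑ j ∈ sne, g j • F j = 0 := by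
    have heq := Finset.sum_subset (Finset.filter_subset (fun j => g j ≠ 0) s)
      (f := fun j => g j • F j) (fun x hx hnx => by
        have hx0 : g x = 0 := by
          by_contra h
          exact hnx (Finset.mem_filter.2 ⟨hx, h⟩)
        show g x • F x = 0
        rw [hx0, zero_smul])
    rw [← hsne] at heq
    rw [heq, hsum]
  have hLBj : ∀ j ∈ sne, LBp V w σmin (g j • F j) := fun j hj =>
    LBp_mono (hσle j hj) (LBp_smul (Finset.mem_filter.1 hj).2 (hLB j))
  have hzero : (0 : MvPolynomial (Fin m) 𝕜) = ∑ j ∈ sne, red V w σmin (g j • F j) := by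
    rw [← red_sum hw hσΓ sne _ hLBj, hsum', red_zero]
  have hredj : ∀ j ∈ sne, red V w σmin (g j • F j)
      = (V.res (V.t (lvl j - σmin)) * V.res (V.t (-V.val (g j)) * g j)) •
        monomial (uf j) (1 : 𝕜) := by
    intro j hj
    have hgj : g j ≠ 0 := (Finset.mem_filter.1 hj).2
    have hlvlΓ : lvl j ∈ V.Gamma := V.gamma_add (hτ j) ⟨g j, hgj, rfl⟩
    have h1 : red V w (lvl j) (g j • F j)
        = V.res (V.t (-V.val (g j)) * g j) • red V w (τ j) (F j) :=
      red_smul hw (hτ j) hgj (hLB j)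
    rw [red_lower hw hσΓ hlvlΓ (hσle j hj) (LBp_smul hgj (hLB j)), h1, hred j,
      smul_smul]
  have hcoeff := congrArg (coeff (uf j₀)) hzero
  rw [coeff_zero, coeff_sum] at hcoeff
  have hterm : ∀ j ∈ sne, coeff (uf j₀) (red V w σmin (g j • F j))
      = if j = j₀ then V.res (V.t (lvl j₀ - σmin)) * V.res (V.t (-V.val (g j₀)) * g j₀) else 0 := by
    intro j hj
    rw [hredj j hj, MvPolynomial.coeff_smul, coeff_monomial]
    split_ifs with h1 h2 h3
    · rw [h2, smul_eq_mul, mul_one]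
    · exact absurd (huinj h1) h2
    · exact absurd (congrArg uf h3) h1
    · rw [smul_eq_mul, mul_zero]
  rw [Finset.sum_congr rfl hterm, Finset.sum_ite_eq' sne j₀, if_pos hj₀] at hcoeff
  have hρ : V.res (V.t (-V.val (g j₀)) * g j₀) ≠ 0 := V.res_unit hgj₀
  have h1 : V.res (V.t (lvl j₀ - σmin)) = 1 := by
    rw [hj₀eq, sub_self, V.t_zero, V.res_one]
  rw [h1, one_mul] at hcoeff
  exact hρ hcoeff.symm

lemma coeff_mem_of_span_monomials {S : Set (MvPolynomial (Fin m) 𝕜)} {US : Set (Fin m →₀ ℕ)}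
    (hS : ∀ g ∈ S, ∃ u ∈ US, g = monomial u 1) {g : MvPolynomial (Fin m) 𝕜}
    (hg : g ∈ Submodule.span 𝕜 S) : ∀ u, coeff u g ≠ 0 → u ∈ US := by
  induction hg using Submodule.span_induction with
  | mem x hx =>
      intro u hu
      obtain ⟨v, hv, rfl⟩ := hS x hx
      rw [coeff_monomial] at hu
      split_ifs at hu with h
      · rw [← h]; exact hv
      · exact absurd rfl hu
  | zero => intro u hu; rw [coeff_zero] at hu; exact absurd rfl hu
  | add x y hx hy ihx ihy =>
      intro u hu
      rw [coeff_add] at hu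
      by_cases h : coeff u x = 0
      · exact ihy u (fun h0 => hu (by rw [h, h0, add_zero]))
      · exact ihx u h
  | smul a x hx ih =>
      intro u hu
      rw [MvPolynomial.coeff_smul] at hu
      exact ih u (fun h0 => hu (by rw [h0, smul_zero]))

end Aux5


set_option maxHeartbeats 1000000 in
set_option synthInstance.maxHeartbeats 400000 in
/-- (First part of Lemma 3.3.)  Let `I ⊆ K[x_0,…,x_n]` be a homogeneous ideal and let
`w ∈ Γ^{n+1}` be such that `in_w(I)_d` is the span of the monomials it contains.  Then the
monomials of degree `d` not lying in `in_w(I)`, regarded as elements of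
`(K[x_0,…,x_n]/I)_d`, form a `K`-basis of `(K[x_0,…,x_n]/I)_d`. -/
theorem monomials_basis_of_quotient {K 𝕜 : Type} [Field K] [Field 𝕜] (V : ValSetup K 𝕜)
    (hdense : Dense V.Gamma) (hQ : ∀ q : ℚ, (q : ℝ) ∈ V.Gamma) {n : ℕ}
    (I : Ideal (MvPolynomial (Fin (n+1)) K)) (hI : IsHomogIdeal I)
    (w : Fin (n+1) → ℝ) (hw : ∀ i, w i ∈ V.Gamma) (d : ℕ)
    (hspan :
      Submodule.restrictScalars 𝕜 (V.initialIdeal w I)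
          ⊓ homogeneousSubmodule (Fin (n+1)) 𝕜 d
        = Submodule.span 𝕜 {g : MvPolynomial (Fin (n+1)) 𝕜 | ∃ u : Fin (n+1) →₀ ℕ,
            (u.sum fun _ e => e) = d ∧ g = monomial u 1 ∧ g ∈ V.initialIdeal w I}) :
    LinearIndependent K
      (fun u : {u : Fin (n+1) →₀ ℕ // (u.sum fun _ e => e) = d ∧
          (monomial u 1 : MvPolynomial (Fin (n+1)) 𝕜) ∉ V.initialIdeal w I} =>
        Ideal.Quotient.mk I (monomial u.1 (1 : K)))
    ∧ Submodule.span K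
        (Set.range (fun u : {u : Fin (n+1) →₀ ℕ // (u.sum fun _ e => e) = d ∧
            (monomial u 1 : MvPolynomial (Fin (n+1)) 𝕜) ∉ V.initialIdeal w I} =>
          Ideal.Quotient.mk I (monomial u.1 (1 : K))))
      = Submodule.map (Ideal.Quotient.mkₐ K I).toLinearMap
          (homogeneousSubmodule (Fin (n+1)) K d) := by
    classical
  set ι := {u : Fin (n+1) →₀ ℕ // (u.sum fun _ e => e) = d ∧
      (monomial u 1 : MvPolynomial (Fin (n+1)) 𝕜) ∉ V.initialIdeal w I} with hι
  set κ := {u : Fin (n+1) →₀ ℕ // (u.sum fun _ e => e) = d ∧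
      (monomial u 1 : MvPolynomial (Fin (n+1)) 𝕜) ∈ V.initialIdeal w I} with hκ
  set σd := {u : Fin (n+1) →₀ ℕ // (u.sum fun _ e => e) = d} with hσd
  haveI : Finite ι := finite_of_degree_cond _ (fun u hu => by rw [← degree_eq_sum]; exact hu.1)
  haveI : Finite κ := finite_of_degree_cond _ (fun u hu => by rw [← degree_eq_sum]; exact hu.1)
  haveI : Finite σd := finite_of_degree_cond _ (fun u hu => by rw [← degree_eq_sum]; exact hu)
  haveI : Fintype ι := Fintype.ofFinite ι
  haveI : Fintype κ := Fintype.ofFinite κ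
  haveI : Fintype σd := Fintype.ofFinite σd
  -- Part 1 : linear independence
  have hind : LinearIndependent K
      (fun u : ι => Ideal.Quotient.mk I (monomial u.1 (1 : K))) := by
    rw [linearIndependent_iff']
    intro s g hsum i hi
    by_contra hgi
    set f : MvPolynomial (Fin (n+1)) K := ∑ j ∈ s, g j • monomial j.1 (1:K) with hf
    have hfI : f ∈ I := by
      rw [← Ideal.Quotient.eq_zero_iff_mem]
      have : Ideal.Quotient.mk I f = ∑ j ∈ s, g j • Ideal.Quotient.mk I (monomial j.1 (1:K)) := by
        rw [hf, ← Ideal.Quotient.mkₐ_eq_mk (R₁ := K)]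
        rw [map_sum]
        simp_rw [map_smul]
      rw [this, hsum]
    have hfcoeff : ∀ u : Fin (n+1) →₀ ℕ, coeff u f ≠ 0 → ∃ j ∈ s, u = j.1 := by
      intro u hu
      by_contra hno
      push_neg at hno
      apply hu
      rw [hf, coeff_sum]
      refine Finset.sum_eq_zero fun j hj => ?_
      rw [MvPolynomial.coeff_smul, coeff_monomial, if_neg (fun h => hno j hj h.symm),
        smul_zero]
    have hfi : coeff (i.1 : Fin (n+1) →₀ ℕ) f = g i := by
      rw [hf, coeff_sum]
      rw [Finset.sum_eq_single i]
      · rw [MvPolynomial.coeff_smul, coeff_monomial, if_pos rfl, smul_eq_mul, mul_one]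
      · intro j hj hji
        rw [MvPolynomial.coeff_smul, coeff_monomial,
          if_neg (fun h => hji (Subtype.ext h)), smul_zero]
      · intro h
        exact absurd hi h
    have hf0 : f ≠ 0 := fun h => hgi (by rw [← hfi, h, coeff_zero])
    have hiwne : V.initialForm w f ≠ 0 := initialForm_ne_zero hw hf0
    have hiwI : V.initialForm w f ∈ V.initialIdeal w I :=
      Ideal.subset_span ⟨f, hfI, rfl⟩
    have hiwh : (V.initialForm w f).IsHomogeneous d := by
      rw [isHomog_iff]
      intro u hu
      obtain ⟨j, hj, rfl⟩ := hfcoeff u (initialForm_coeff_ne_zero hu)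
      rw [← degree_eq_sum]
      exact j.2.1
    have hmem : V.initialForm w f ∈ Submodule.span 𝕜 {g : MvPolynomial (Fin (n+1)) 𝕜 |
        ∃ u : Fin (n+1) →₀ ℕ, (u.sum fun _ e => e) = d ∧ g = monomial u 1 ∧
          g ∈ V.initialIdeal w I} := by
      rw [← hspan]
      exact Submodule.mem_inf.2 ⟨hiwI, (mem_homogeneousSubmodule _ _).2 hiwh⟩
    obtain ⟨u₀, hu₀⟩ := MvPolynomial.ne_zero_iff.1 hiwne
    have hUS := coeff_mem_of_span_monomials (US := {u : Fin (n+1) →₀ ℕ |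
        (u.sum fun _ e => e) = d ∧ (monomial u 1 : MvPolynomial (Fin (n+1)) 𝕜) ∈
          V.initialIdeal w I})
      (fun g hg => by
        obtain ⟨u, hu1, hu2, hu3⟩ := hg
        exact ⟨u, ⟨hu1, hu2 ▸ hu3⟩, hu2⟩) hmem u₀ hu₀
    obtain ⟨j, hj, rfl⟩ := hfcoeff u₀ (initialForm_coeff_ne_zero hu₀)
    exact j.2.2 hUS.2
  refine ⟨hind, ?_⟩
  -- Part 2 : spanning
  set H := homogeneousSubmodule (Fin (n+1)) K d with hH
  set Q : MvPolynomial (Fin (n+1)) K →ₗ[K] (MvPolynomial (Fin (n+1)) K ⧸ I) :=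
    (Ideal.Quotient.mkₐ K I).toLinearMap with hQdef
  have hQapp : ∀ p, Q p = Ideal.Quotient.mk I p := fun p => by
    rw [hQdef]
    simp [Ideal.Quotient.mkₐ_eq_mk]
  -- H is spanned by the degree-d monomials
  have hHspan : H = Submodule.span K (Set.range fun u : σd => monomial u.1 (1:K)) := by
    apply le_antisymm
    · intro p hp
      rw [p.as_sum]
      refine Submodule.sum_mem _ fun v hv => ?_
      have hvd : (v.sum fun _ e => e) = d := by
        rw [degree_eq_sum]
        exact isHomog_iff.1 ((mem_homogeneousSubmodule _ _).1 hp) v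
          (MvPolynomial.mem_support_iff.1 hv)
      have : monomial v (coeff v p) = (coeff v p) • monomial v (1:K) := by
        rw [MvPolynomial.smul_monomial, smul_eq_mul, mul_one]
      rw [this]
      exact Submodule.smul_mem _ _ (Submodule.subset_span ⟨⟨v, hvd⟩, rfl⟩)
    · rw [Submodule.span_le]
      rintro _ ⟨u, rfl⟩
      exact (mem_homogeneousSubmodule _ _).2
        (isHomogeneous_monomial _ (by rw [← degree_eq_sum]; exact u.2))
  haveI hHfd : FiniteDimensional K H := by
    rw [hHspan]
    exact FiniteDimensional.span_of_finite K (Set.finite_range _)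
  have hmonos : LinearIndependent K (fun u : σd => monomial u.1 (1:K)) := by
    have h1 := (basisMonomials (Fin (n+1)) K).linearIndependent
    have h2 := h1.comp (fun u : σd => u.1) Subtype.val_injective
    have h3 : (fun u : σd => monomial u.1 (1:K))
        = (⇑(basisMonomials (Fin (n+1)) K)) ∘ (fun u : σd => u.1) := by
      funext u
      rw [Function.comp_apply, coe_basisMonomials]
    rw [h3]
    exact h2
  have hfrH : Module.finrank K H = Fintype.card σd := by
    rw [hHspan]
    exact finrank_span_eq_card hmonos
  set qH := Q.domRestrict H with hqH
  have hrange : LinearMap.range qH = Submodule.map Q H := LinearMap.range_domRestrict H Q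
  have hrank : Module.finrank K (LinearMap.range qH) + Module.finrank K (LinearMap.ker qH)
      = Fintype.card σd := by
    rw [← hfrH]
    exact LinearMap.finrank_range_add_finrank_ker qH
  -- lifts of the initial monomials
  have hchoice : ∀ u : κ, ∃ f τ, f ∈ I ∧ (∀ v : Fin (n+1) →₀ ℕ, coeff v f ≠ 0 → v.degree = d)
      ∧ τ ∈ V.Gamma ∧ LBp V w τ f ∧ (monomial u.1 (1:𝕜)) = red V w τ f := by
    intro u
    exact mem_SdSet_of_initialIdeal hw I hI u.2.2
      (isHomogeneous_monomial _ (by rw [← degree_eq_sum]; exact u.2.1))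
  choose F τκ hFI hFdeg hτΓ hFLB hFred using hchoice
  have hFind : LinearIndependent K F :=
    lifts_linearIndependent hw (fun u : κ => u.1) Subtype.val_injective F τκ hτΓ hFLB
      (fun u => (hFred u).symm)
  have hFH : ∀ u : κ, F u ∈ H := fun u =>
    (mem_homogeneousSubmodule _ _).2 (isHomog_iff.2 (hFdeg u))
  have hkermem : ∀ u : κ, (⟨F u, hFH u⟩ : H) ∈ LinearMap.ker qH := by
    intro u
    rw [LinearMap.mem_ker]
    show Q (F u) = 0
    rw [hQapp]
    exact Ideal.Quotient.eq_zero_iff_mem.2 (hFI u)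
  set S : Submodule K (MvPolynomial (Fin (n+1)) K) := Submodule.span K (Set.range F) with hS
  have hfrS : Module.finrank K S = Fintype.card κ := finrank_span_eq_card hFind
  have hSle : S ≤ Submodule.map H.subtype (LinearMap.ker qH) := by
    rw [hS, Submodule.span_le]
    rintro _ ⟨u, rfl⟩
    exact ⟨⟨F u, hFH u⟩, hkermem u, rfl⟩
  have hκle : Fintype.card κ ≤ Module.finrank K (LinearMap.ker qH) := by
    rw [← hfrS, ← Submodule.finrank_map_subtype_eq H (LinearMap.ker qH)]
    exact Submodule.finrank_mono hSle
  have hcards : Fintype.card σd = Fintype.card ι + Fintype.card κ := by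
    have e : ι ⊕ κ ≃ σd :=
      { toFun := fun x => Sum.elim (fun u => ⟨u.1, u.2.1⟩) (fun u => ⟨u.1, u.2.1⟩) x
        invFun := fun v =>
          if h : (monomial v.1 1 : MvPolynomial (Fin (n+1)) 𝕜) ∈ V.initialIdeal w I
          then Sum.inr ⟨v.1, v.2, h⟩ else Sum.inl ⟨v.1, v.2, h⟩
        left_inv := by
          rintro (u | u)
          · simp [u.2.2]
          · simp [u.2.2]
        right_inv := by
          intro v
          by_cases h : (monomial v.1 1 : MvPolynomial (Fin (n+1)) 𝕜) ∈ V.initialIdeal w I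
          · simp [h]
          · simp [h] }
    rw [← Fintype.card_congr e, Fintype.card_sum]
  have hWle : Module.finrank K (Submodule.map Q H) ≤ Fintype.card ι := by
    rw [← hrange]
    omega
  haveI : FiniteDimensional K (Submodule.map Q H) := by
    rw [← hrange]
    infer_instance
  have hle : Submodule.span K (Set.range (fun u : ι => Ideal.Quotient.mk I (monomial u.1 (1:K))))
      ≤ Submodule.map Q H := by
    rw [Submodule.span_le]
    rintro _ ⟨u, rfl⟩
    exact ⟨monomial u.1 (1:K), (mem_homogeneousSubmodule _ _).2
      (isHomogeneous_monomial _ (by rw [← degree_eq_sum]; exact u.2.1)), hQapp _⟩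
  have hfr : Module.finrank K (Submodule.span K (Set.range
      (fun u : ι => Ideal.Quotient.mk I (monomial u.1 (1:K))))) = Fintype.card ι :=
    finrank_span_eq_card hind
  exact Submodule.eq_of_le_of_finrank_le hle (by rw [hfr]; exact hWle)
end
end

section
/- Let I be a homogeneous ideal in K[x_0,…,x_n] and let w, v ∈ Γ^{n+1}. Then there exists ε > 0 such that for all ε' ∈ Γ with 0 < ε' < ε one has in_v(in_w(I)) = in_{w+ε'v}(I) as ideals of k[x_0,…,x_n]. -/
open MvPolynomial
open scoped Classical

noncomputable section

/-! ### Auxiliary development -/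

/-- A weakening of `ValSetup` (dropping nontriviality and surjectivity of the residue map)
which is also satisfied by the trivial valuation on the residue field itself. -/
structure PreVal (K 𝕜 : Type) [Field K] [Field 𝕜] where
  val : K → ℝ
  val_mul : ∀ {a b : K}, a ≠ 0 → b ≠ 0 → val (a * b) = val a + val b
  val_add : ∀ {a b : K}, a ≠ 0 → b ≠ 0 → a + b ≠ 0 → min (val a) (val b) ≤ val (a + b)
  val_one : val 1 = 0
  res : K → 𝕜
  res_add : ∀ {a b : K}, (a = 0 ∨ 0 ≤ val a) → (b = 0 ∨ 0 ≤ val b) → res (a + b) = res a + res b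
  res_mul : ∀ {a b : K}, (a = 0 ∨ 0 ≤ val a) → (b = 0 ∨ 0 ≤ val b) → res (a * b) = res a * res b
  res_one : res 1 = 1
  res_zero : res 0 = 0
  res_eq_zero_iff : ∀ {a : K}, a ≠ 0 → 0 ≤ val a → (res a = 0 ↔ 0 < val a)
  t : ℝ → K
  t_ne_zero : ∀ {r : ℝ}, (∃ a : K, a ≠ 0 ∧ val a = r) → t r ≠ 0
  t_add : ∀ {r₁ r₂ : ℝ}, (∃ a : K, a ≠ 0 ∧ val a = r₁) → (∃ a : K, a ≠ 0 ∧ val a = r₂) →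
    t (r₁ + r₂) = t r₁ * t r₂
  val_t : ∀ {r : ℝ}, (∃ a : K, a ≠ 0 ∧ val a = r) → val (t r) = r

namespace PreVal

variable {K 𝕜 : Type} [Field K] [Field 𝕜] (P : PreVal K 𝕜)

/-- The `PreVal` underlying a `ValSetup`. -/
def ofVal (V : ValSetup K 𝕜) : PreVal K 𝕜 :=
  { val := V.val, val_mul := V.val_mul, val_add := V.val_add, val_one := V.val_one
    res := V.res, res_add := V.res_add, res_mul := V.res_mul, res_one := V.res_one
    res_zero := V.res_zero, res_eq_zero_iff := V.res_eq_zero_iff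
    t := V.t, t_ne_zero := V.t_ne_zero, t_add := V.t_add, val_t := V.val_t }

/-- The trivial valuation on a field, as a `PreVal`. -/
def triv (𝕜 : Type) [Field 𝕜] : PreVal 𝕜 𝕜 :=
  { val := fun _ => 0
    val_mul := fun _ _ => by simp
    val_add := fun _ _ _ => by simp
    val_one := rfl
    res := id
    res_add := fun _ _ => rfl
    res_mul := fun _ _ => rfl
    res_one := rfl
    res_zero := rfl
    res_eq_zero_iff := fun ha _ => by simpa using ha
    t := fun _ => 1
    t_ne_zero := fun _ => one_ne_zero
    t_add := fun _ _ => (one_mul 1).symm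
    val_t := fun h => by rcases h with ⟨a, ha, rfl⟩; rfl }

/-- The value group of a `PreVal`. -/
def SΓ : Set ℝ := {r : ℝ | ∃ a : K, a ≠ 0 ∧ P.val a = r}

lemma zero_mem_SΓ : (0 : ℝ) ∈ P.SΓ := ⟨1, one_ne_zero, P.val_one⟩

lemma val_mem_SΓ {a : K} (ha : a ≠ 0) : P.val a ∈ P.SΓ := ⟨a, ha, rfl⟩

lemma val_inv {a : K} (ha : a ≠ 0) : P.val a⁻¹ = -(P.val a) := by
  have h := P.val_mul ha (inv_ne_zero ha)
  rw [mul_inv_cancel₀ ha, P.val_one] at h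
  linarith

lemma neg_mem_SΓ {r : ℝ} (hr : r ∈ P.SΓ) : -r ∈ P.SΓ := by
  rcases hr with ⟨a, ha, rfl⟩
  exact ⟨a⁻¹, inv_ne_zero ha, P.val_inv ha⟩

lemma add_mem_SΓ {r s : ℝ} (hr : r ∈ P.SΓ) (hs : s ∈ P.SΓ) : r + s ∈ P.SΓ := by
  rcases hr with ⟨a, ha, rfl⟩; rcases hs with ⟨b, hb, rfl⟩
  exact ⟨a * b, mul_ne_zero ha hb, P.val_mul ha hb⟩

lemma nsmul_mem_SΓ {r : ℝ} (hr : r ∈ P.SΓ) (n : ℕ) : (n : ℝ) * r ∈ P.SΓ := by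
  induction n with
  | zero => simpa using P.zero_mem_SΓ
  | succ n ih =>
      have := P.add_mem_SΓ ih hr
      push_cast
      rw [add_mul, one_mul]
      exact this

lemma t_zero : P.t 0 = 1 := by
  have h := P.t_add (r₁ := 0) (r₂ := 0) P.zero_mem_SΓ P.zero_mem_SΓ
  rw [add_zero] at h
  have ht : P.t 0 ≠ 0 := P.t_ne_zero P.zero_mem_SΓ
  field_simp at h
  tauto

lemma t_mul_t_neg {r : ℝ} (hr : r ∈ P.SΓ) : P.t r * P.t (-r) = 1 := by
  have h := P.t_add hr (P.neg_mem_SΓ hr)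
  rw [add_neg_cancel, P.t_zero] at h
  exact h.symm

lemma val_neg {a : K} (ha : a ≠ 0) : P.val (-a) = P.val a := by
  have hm1 : (-1 : K) ≠ 0 := by norm_num
  have h2 : P.val ((-1 : K) * (-1)) = P.val (-1) + P.val (-1) := P.val_mul hm1 hm1
  rw [show ((-1 : K) * (-1)) = 1 by ring, P.val_one] at h2
  have h1 : P.val (-1 : K) = 0 := by linarith
  have := P.val_mul hm1 ha
  rw [h1] at this
  simpa using this

lemma res_neg {a : K} (h : a = 0 ∨ 0 ≤ P.val a) : P.res (-a) = -(P.res a) := by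
  rcases eq_or_ne a 0 with rfl | ha
  · simp [P.res_zero]
  · have hva : 0 ≤ P.val a := h.resolve_left ha
    have hna : (-a) = 0 ∨ 0 ≤ P.val (-a) := Or.inr (by rw [P.val_neg ha]; exact hva)
    have h3 := P.res_add h hna
    rw [add_neg_cancel, P.res_zero] at h3
    exact (neg_eq_of_add_eq_zero_right h3.symm).symm

lemma val_add_ge {a b : K} {r : ℝ} (ha : a = 0 ∨ r ≤ P.val a) (hb : b = 0 ∨ r ≤ P.val b) :
    a + b = 0 ∨ r ≤ P.val (a + b) := by
  rcases eq_or_ne a 0 with rfl | ha0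
  · simpa using hb
  rcases eq_or_ne b 0 with rfl | hb0
  · simpa using ha
  rcases eq_or_ne (a + b) 0 with h0 | h0
  · exact Or.inl h0
  right
  have := P.val_add ha0 hb0 h0
  have hra := ha.resolve_left ha0
  have hrb := hb.resolve_left hb0
  exact le_trans (le_min hra hrb) this

lemma val_add_gt {a b : K} {r : ℝ} (ha : a = 0 ∨ r < P.val a) (hb : b = 0 ∨ r < P.val b) :
    a + b = 0 ∨ r < P.val (a + b) := by
  rcases eq_or_ne a 0 with rfl | ha0
  · simpa using hb
  rcases eq_or_ne b 0 with rfl | hb0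
  · simpa using ha
  rcases eq_or_ne (a + b) 0 with h0 | h0
  · exact Or.inl h0
  right
  have h := P.val_add ha0 hb0 h0
  have hra := ha.resolve_left ha0
  have hrb := hb.resolve_left hb0
  exact lt_of_lt_of_le (lt_min hra hrb) h

/-- If `val a < val b` then `a + b ≠ 0` and `val (a+b) = val a`. -/
lemma val_add_eq_left {a b : K} (ha : a ≠ 0) (hb : b ≠ 0) (h : P.val a < P.val b) :
    a + b ≠ 0 ∧ P.val (a + b) = P.val a := by
  have hne : a + b ≠ 0 := by
    intro h0
    have hb' : b = -a := (neg_eq_of_add_eq_zero_right h0).symm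
    rw [hb', P.val_neg ha] at h
    exact lt_irrefl _ h
  refine ⟨hne, le_antisymm ?_ ?_⟩
  · -- val (a+b) ≤ val a : a = (a+b) + (-b)
    have hnb : (-b : K) ≠ 0 := neg_ne_zero.mpr hb
    have h2 : (a + b) + (-b) = a := by ring
    have h3 := P.val_add hne hnb (by rw [h2]; exact ha)
    rw [h2, P.val_neg hb] at h3
    by_contra hcon
    push_neg at hcon
    have : P.val a < min (P.val (a+b)) (P.val b) := lt_min hcon h
    linarith [h3]
  · have h4 := P.val_add ha hb hne
    rw [min_eq_left (le_of_lt h)] at h4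
    exact h4

end PreVal
/-! ### Dot products -/

lemma dotN_add_right {m : ℕ} (w : Fin m → ℝ) (u₁ u₂ : Fin m →₀ ℕ) :
    dotN w (u₁ + u₂) = dotN w u₁ + dotN w u₂ := by
  unfold dotN
  rw [← Finset.sum_add_distrib]
  refine Finset.sum_congr rfl fun i _ => ?_
  rw [Finsupp.add_apply]
  push_cast
  ring

lemma dotN_weights {m : ℕ} (w v : Fin m → ℝ) (ε : ℝ) (u : Fin m →₀ ℕ) :
    dotN (w + ε • v) u = dotN w u + ε * dotN v u := by
  unfold dotN
  rw [Finset.mul_sum, ← Finset.sum_add_distrib]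
  refine Finset.sum_congr rfl fun i _ => ?_
  simp only [Pi.add_apply, Pi.smul_apply, smul_eq_mul]
  ring

namespace PreVal

variable {K 𝕜 : Type} [Field K] [Field 𝕜] (P : PreVal K 𝕜)

lemma sum_mem_SΓ {α : Type*} (s : Finset α) (g : α → ℝ) (h : ∀ i ∈ s, g i ∈ P.SΓ) :
    ∑ i ∈ s, g i ∈ P.SΓ := by
  classical
  induction s using Finset.induction_on with
  | empty => simpa using P.zero_mem_SΓ
  | @insert a s' hx ih =>
      rw [Finset.sum_insert hx]
      exact P.add_mem_SΓ (h a (Finset.mem_insert_self a s'))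
        (ih fun i hi => h i (Finset.mem_insert_of_mem hi))

lemma dotN_mem_SΓ {m : ℕ} {w : Fin m → ℝ} (hw : ∀ i, w i ∈ P.SΓ) (u : Fin m →₀ ℕ) :
    dotN w u ∈ P.SΓ := by
  refine P.sum_mem_SΓ _ _ fun i _ => ?_
  rw [mul_comm]
  exact P.nsmul_mem_SΓ (hw i) (u i)

/-! ### Generic tropicalization, initial coefficients and initial forms -/

open MvPolynomial

variable {m : ℕ}

/-- Generic tropicalization (same formula as `ValSetup.trop` and `tropTriv`). -/
def ltrop (f : MvPolynomial (Fin m) K) (w : Fin m → ℝ) : ℝ :=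
  sInf ((fun u => P.val (coeff u f) + dotN w u) '' (f.support : Set (Fin m →₀ ℕ)))

/-- The initial coefficient `(t^{-val c} c)‾`. -/
def ic (c : K) : 𝕜 := P.res (P.t (-(P.val c)) * c)

/-- Generic initial form. -/
def inF (w : Fin m → ℝ) (f : MvPolynomial (Fin m) K) : MvPolynomial (Fin m) 𝕜 :=
  ∑ u ∈ f.support.filter (fun u => P.val (coeff u f) + dotN w u = P.ltrop f w),
    monomial u (P.ic (coeff u f))

lemma ofVal_ltrop {V : ValSetup K 𝕜} (f : MvPolynomial (Fin m) K) (w : Fin m → ℝ) :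
    (PreVal.ofVal V).ltrop f w = V.trop f w := rfl

lemma ofVal_inF {V : ValSetup K 𝕜} (w : Fin m → ℝ) (f : MvPolynomial (Fin m) K) :
    (PreVal.ofVal V).inF w f = V.initialForm w f := rfl

lemma triv_ltrop (g : MvPolynomial (Fin m) 𝕜) (v : Fin m → ℝ) :
    (PreVal.triv 𝕜).ltrop g v = tropTriv g v := by
  unfold ltrop tropTriv
  have : (fun u : Fin m →₀ ℕ => (PreVal.triv 𝕜).val (coeff u g) + dotN v u)
      = fun u => dotN v u := funext fun u => zero_add _
  rw [this]

lemma triv_ic (c : 𝕜) : (PreVal.triv 𝕜).ic c = c := one_mul c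

lemma triv_inF (v : Fin m → ℝ) (g : MvPolynomial (Fin m) 𝕜) :
    (PreVal.triv 𝕜).inF v g = initialFormTriv v g := by
  unfold inF initialFormTriv
  rw [show ((PreVal.triv 𝕜).ltrop g v) = tropTriv g v from triv_ltrop g v]
  refine Finset.sum_congr (by
    refine Finset.filter_congr fun u hu => ?_
    constructor
    · intro h; rw [← h]; exact (zero_add _).symm
    · intro h; rw [h]; exact zero_add _) fun u _ => by rw [triv_ic]

/-! ### Basic properties of `ltrop` -/

lemma ltrop_le {f : MvPolynomial (Fin m) K} {w : Fin m → ℝ} {u : Fin m →₀ ℕ}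
    (h : coeff u f ≠ 0) : P.ltrop f w ≤ P.val (coeff u f) + dotN w u := by
  apply csInf_le ((f.support.finite_toSet.image _).bddBelow)
  exact ⟨u, by simpa using h, rfl⟩

lemma ltrop_attained {f : MvPolynomial (Fin m) K} (hf : f ≠ 0) (w : Fin m → ℝ) :
    ∃ u, coeff u f ≠ 0 ∧ P.val (coeff u f) + dotN w u = P.ltrop f w := by
  have hne : ((fun u => P.val (coeff u f) + dotN w u) '' (f.support : Set (Fin m →₀ ℕ))).Nonempty := by
    obtain ⟨u, hu⟩ := (support_nonempty.mpr hf)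
    exact ⟨_, ⟨u, hu, rfl⟩⟩
  have hfin : ((fun u => P.val (coeff u f) + dotN w u) '' (f.support : Set (Fin m →₀ ℕ))).Finite :=
    f.support.finite_toSet.image _
  have := hne.csInf_mem hfin
  obtain ⟨u, hu, hval⟩ := this
  exact ⟨u, by simpa using hu, hval⟩

lemma ltrop_eq {f : MvPolynomial (Fin m) K} {w : Fin m → ℝ} {τ : ℝ}
    (h1 : ∃ u, coeff u f ≠ 0 ∧ P.val (coeff u f) + dotN w u = τ)
    (h2 : ∀ u, coeff u f ≠ 0 → τ ≤ P.val (coeff u f) + dotN w u) :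
    P.ltrop f w = τ := by
  obtain ⟨u, hu, huv⟩ := h1
  refine le_antisymm (by rw [← huv]; exact P.ltrop_le hu) ?_
  have hf : f ≠ 0 := fun h0 => hu (by simp [h0])
  obtain ⟨u', hu', hv'⟩ := P.ltrop_attained hf w
  rw [← hv']
  exact h2 u' hu'

lemma ltrop_mem_SΓ {f : MvPolynomial (Fin m) K} (hf : f ≠ 0) {w : Fin m → ℝ}
    (hw : ∀ i, w i ∈ P.SΓ) : P.ltrop f w ∈ P.SΓ := by
  obtain ⟨u, hu, hv⟩ := P.ltrop_attained hf w
  rw [← hv]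
  exact P.add_mem_SΓ (P.val_mem_SΓ hu) (P.dotN_mem_SΓ hw u)

/-! ### `t`-scaling and residue lemmas -/

lemma val_t_mul {γ : ℝ} (hγ : γ ∈ P.SΓ) {a : K} (ha : a ≠ 0) :
    P.t γ * a ≠ 0 ∧ P.val (P.t γ * a) = γ + P.val a := by
  have ht : P.t γ ≠ 0 := P.t_ne_zero hγ
  exact ⟨mul_ne_zero ht ha, by rw [P.val_mul ht ha, P.val_t hγ]⟩

lemma res_t_eq_zero {γ : ℝ} (hγ : γ ∈ P.SΓ) {a : K} (ha : a ≠ 0) (h : 0 < γ + P.val a) :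
    P.res (P.t γ * a) = 0 := by
  obtain ⟨hne, hval⟩ := P.val_t_mul hγ ha
  exact (P.res_eq_zero_iff hne (by rw [hval]; exact h.le)).mpr (by rw [hval]; exact h)

lemma res_t_add {γ : ℝ} (hγ : γ ∈ P.SΓ) {a b : K}
    (h1 : a = 0 ∨ 0 ≤ γ + P.val a) (h2 : b = 0 ∨ 0 ≤ γ + P.val b) :
    P.res (P.t γ * (a + b)) = P.res (P.t γ * a) + P.res (P.t γ * b) := by
  rw [mul_add]
  refine P.res_add ?_ ?_
  · rcases eq_or_ne a 0 with rfl | ha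
    · exact Or.inl (mul_zero _)
    · exact Or.inr (by rw [(P.val_t_mul hγ ha).2]; exact h1.resolve_left ha)
  · rcases eq_or_ne b 0 with rfl | hb
    · exact Or.inl (mul_zero _)
    · exact Or.inr (by rw [(P.val_t_mul hγ hb).2]; exact h2.resolve_left hb)

lemma ic_zero : P.ic (0 : K) = 0 := by rw [ic, mul_zero, P.res_zero]

lemma val_ic_arg {c : K} (hc : c ≠ 0) :
    P.t (-(P.val c)) * c ≠ 0 ∧ P.val (P.t (-(P.val c)) * c) = 0 := by
  obtain ⟨h1, h2⟩ := P.val_t_mul (P.neg_mem_SΓ (P.val_mem_SΓ hc)) hc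
  exact ⟨h1, by rw [h2]; ring⟩

lemma ic_ne_zero {c : K} (hc : c ≠ 0) : P.ic c ≠ 0 := by
  obtain ⟨h1, h2⟩ := P.val_ic_arg hc
  rw [ic]
  intro h0
  have := (P.res_eq_zero_iff h1 (le_of_eq h2.symm)).mp h0
  rw [h2] at this
  exact lt_irrefl _ this

lemma ic_mul (a b : K) : P.ic (a * b) = P.ic a * P.ic b := by
  rcases eq_or_ne a 0 with rfl | ha
  · rw [zero_mul, P.ic_zero, zero_mul]
  rcases eq_or_ne b 0 with rfl | hb
  · rw [mul_zero, P.ic_zero, mul_zero]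
  have hma : -(P.val a) ∈ P.SΓ := P.neg_mem_SΓ (P.val_mem_SΓ ha)
  have hmb : -(P.val b) ∈ P.SΓ := P.neg_mem_SΓ (P.val_mem_SΓ hb)
  have hv : -(P.val (a * b)) = -(P.val a) + -(P.val b) := by
    rw [P.val_mul ha hb]; ring
  rw [ic, ic, ic, hv, P.t_add hma hmb]
  rw [show P.t (-P.val a) * P.t (-P.val b) * (a * b)
      = (P.t (-P.val a) * a) * (P.t (-P.val b) * b) by ring]
  refine P.res_mul (Or.inr ?_) (Or.inr ?_)
  · exact le_of_eq (P.val_ic_arg ha).2.symm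
  · exact le_of_eq (P.val_ic_arg hb).2.symm

/-- Uniform-exponent description of the initial coefficient. -/
lemma res_t_eq_ic {c : K} {γ : ℝ} (h : γ = -(P.val c)) :
    P.res (P.t γ * c) = P.ic c := by rw [ic, h]

/-! ### The coefficient-level `lc` function -/

/-- Coefficient of a level form: `ic c` if `c ≠ 0` and `val c + du = τ`, else `0`. -/
def lc (τ du : ℝ) (c : K) : 𝕜 := if c ≠ 0 ∧ P.val c + du = τ then P.ic c else 0

lemma lc_zero (τ du : ℝ) : P.lc τ du (0 : K) = 0 := by
  rw [lc, if_neg]; rintro ⟨h, -⟩; exact h rfl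

lemma lc_of_ne {τ du : ℝ} {c : K} (h : ¬ (c ≠ 0 ∧ P.val c + du = τ)) : P.lc τ du c = 0 :=
  if_neg h

lemma lc_of_eq {τ du : ℝ} {c : K} (hc : c ≠ 0) (h : P.val c + du = τ) :
    P.lc τ du c = P.ic c := if_pos ⟨hc, h⟩

lemma lc_add {τ du : ℝ} {a b : K}
    (h1 : a = 0 ∨ τ ≤ P.val a + du) (h2 : b = 0 ∨ τ ≤ P.val b + du) :
    P.lc τ du (a + b) = P.lc τ du a + P.lc τ du b := by
  rcases eq_or_ne a 0 with rfl | ha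
  · rw [zero_add, P.lc_zero, zero_add]
  rcases eq_or_ne b 0 with rfl | hb
  · rw [add_zero, P.lc_zero, add_zero]
  have hva := h1.resolve_left ha
  have hvb := h2.resolve_left hb
  rcases lt_trichotomy (P.val a) (P.val b) with hab | hab | hab
  · -- val a < val b : lc (a+b) = lc a, lc b = 0
    obtain ⟨hne, hv⟩ := P.val_add_eq_left ha hb hab
    have hlcb : P.lc τ du b = 0 := P.lc_of_ne (by rintro ⟨-, hEq⟩; linarith)
    rw [hlcb, add_zero]
    by_cases hca : P.val a + du = τ
    · rw [P.lc_of_eq ha hca, P.lc_of_eq hne (by rw [hv]; exact hca)]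
      -- ic (a+b) = ic a
      have hγ : -(P.val (a+b)) = -(P.val a) := by rw [hv]
      have hmem : -(P.val a) ∈ P.SΓ := P.neg_mem_SΓ (P.val_mem_SΓ ha)
      rw [ic, hγ, P.res_t_add hmem (Or.inr (by simp)) (Or.inr (by linarith)),
        P.res_t_eq_ic rfl, P.res_t_eq_zero hmem hb (by linarith), add_zero, ic]
    · rw [P.lc_of_ne (fun h => hca h.2), P.lc_of_ne (by rintro ⟨-, hEq⟩; rw [hv] at hEq; exact hca hEq)]
  · -- val a = val b
    by_cases hca : P.val a + du = τ
    · -- both a and b at level τ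
      rw [P.lc_of_eq ha hca, P.lc_of_eq hb (by rw [← hab]; exact hca)]
      have hmem : -(P.val a) ∈ P.SΓ := P.neg_mem_SΓ (P.val_mem_SΓ ha)
      have hres : P.ic a + P.ic b = P.res (P.t (-(P.val a)) * (a + b)) := by
        rw [P.res_t_add hmem (Or.inr (by linarith)) (Or.inr (by rw [← hab]; linarith))]
        rw [P.res_t_eq_ic rfl, P.res_t_eq_ic (by rw [hab])]
      rcases eq_or_ne (a + b) 0 with hzero | hne
      · rw [hzero, P.lc_zero, hres, hzero, mul_zero, P.res_zero]
      · have hge : P.val a ≤ P.val (a + b) := by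
          have := P.val_add ha hb hne
          rw [min_eq_left (le_of_eq hab)] at this
          exact this
        rcases eq_or_lt_of_le hge with heq | hlt
        · rw [P.lc_of_eq hne (by rw [← heq]; exact hca), hres,
            P.res_t_eq_ic (by rw [← heq]), ic]
        · rw [P.lc_of_ne (by rintro ⟨-, hEq⟩; linarith), hres,
            P.res_t_eq_zero hmem hne (by linarith)]
    · -- neither at level τ (levels > τ); a+b also above level τ
      have e1 : P.lc τ du a = 0 := P.lc_of_ne (fun h => hca h.2)
      have e2 : P.lc τ du b = 0 := P.lc_of_ne (by
        rintro ⟨-, hEq⟩; rw [← hab] at hEq; exact hca hEq)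
      have e3 : P.lc τ du (a + b) = 0 := by
        refine P.lc_of_ne ?_
        rintro ⟨hne, hEq⟩
        have hmin := P.val_add ha hb hne
        rw [min_eq_left (le_of_eq hab)] at hmin
        have hlt : τ < P.val a + du := lt_of_le_of_ne hva (fun h => hca h.symm)
        linarith
      rw [e1, e2, e3, add_zero]
  · -- val b < val a : symmetric
    have hcomm : a + b = b + a := add_comm a b
    obtain ⟨hne, hv⟩ := P.val_add_eq_left hb ha hab
    have hlca : P.lc τ du a = 0 := P.lc_of_ne (by rintro ⟨-, hEq⟩; linarith)
    rw [hlca, zero_add, hcomm]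
    by_cases hcb : P.val b + du = τ
    · rw [P.lc_of_eq hb hcb, P.lc_of_eq hne (by rw [hv]; exact hcb)]
      have hγ : -(P.val (b+a)) = -(P.val b) := by rw [hv]
      have hmem : -(P.val b) ∈ P.SΓ := P.neg_mem_SΓ (P.val_mem_SΓ hb)
      rw [ic, hγ, P.res_t_add hmem (Or.inr (by simp)) (Or.inr (by linarith)),
        P.res_t_eq_ic rfl, P.res_t_eq_zero hmem ha (by linarith), add_zero, ic]
    · rw [P.lc_of_ne (fun h => hcb h.2), P.lc_of_ne (by rintro ⟨-, hEq⟩; rw [hv] at hEq; exact hcb hEq)]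

lemma lc_const_mul {τ du : ℝ} (c : K) (hc : c ≠ 0) (a : K) :
    P.lc τ du (c * a) = P.ic c * P.lc (τ - P.val c) du a := by
  rcases eq_or_ne a 0 with rfl | ha
  · rw [mul_zero, P.lc_zero, P.lc_zero, mul_zero]
  by_cases h : P.val a + du = τ - P.val c
  · rw [P.lc_of_eq ha h, P.lc_of_eq (mul_ne_zero hc ha) (by rw [P.val_mul hc ha]; linarith),
      P.ic_mul]
  · rw [P.lc_of_ne (fun hx => h (by have := hx.2; rw [P.val_mul hc ha] at this; linarith)),
      P.lc_of_ne (fun hx => h hx.2), mul_zero]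

end PreVal
namespace PreVal

open MvPolynomial

variable {K 𝕜 : Type} [Field K] [Field 𝕜] (P : PreVal K 𝕜) {m : ℕ}

/-! ### Sums and valuations -/

lemma val_sum_ge {α : Type*} (s : Finset α) (g : α → K) {r : ℝ}
    (h : ∀ i ∈ s, g i = 0 ∨ r ≤ P.val (g i)) :
    (∑ i ∈ s, g i) = 0 ∨ r ≤ P.val (∑ i ∈ s, g i) := by
  classical
  induction s using Finset.induction_on with
  | empty => simp
  | @insert a s' hx ih =>
      rw [Finset.sum_insert hx]
      exact P.val_add_ge (h a (Finset.mem_insert_self a s'))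
        (ih fun i hi => h i (Finset.mem_insert_of_mem hi))

lemma val_sum_gt {α : Type*} (s : Finset α) (g : α → K) {r : ℝ}
    (h : ∀ i ∈ s, g i = 0 ∨ r < P.val (g i)) :
    (∑ i ∈ s, g i) = 0 ∨ r < P.val (∑ i ∈ s, g i) := by
  classical
  induction s using Finset.induction_on with
  | empty => simp
  | @insert a s' hx ih =>
      rw [Finset.sum_insert hx]
      exact P.val_add_gt (h a (Finset.mem_insert_self a s'))
        (ih fun i hi => h i (Finset.mem_insert_of_mem hi))

lemma res_t_sum {γ : ℝ} (hγ : γ ∈ P.SΓ) {α : Type*} (s : Finset α) (g : α → K)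
    (h : ∀ i ∈ s, g i = 0 ∨ 0 ≤ γ + P.val (g i)) :
    P.res (P.t γ * ∑ i ∈ s, g i) = ∑ i ∈ s, P.res (P.t γ * g i) := by
  classical
  induction s using Finset.induction_on with
  | empty => simp [P.res_zero]
  | @insert a s' hx ih =>
      rw [Finset.sum_insert hx, Finset.sum_insert hx, ← ih (fun i hi => h i (Finset.mem_insert_of_mem hi))]
      refine P.res_t_add hγ (h a (Finset.mem_insert_self a s')) ?_
      have := P.val_sum_ge s' g (r := -γ) (fun i hi => by
        rcases h i (Finset.mem_insert_of_mem hi) with h0 | h0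
        · exact Or.inl h0
        · exact Or.inr (by linarith))
      rcases this with h0 | h0
      · exact Or.inl h0
      · exact Or.inr (by linarith)

/-! ### Level forms -/

/-- The "level-`τ` part" of `f` w.r.t. weight `w`, reduced to the residue field. -/
def levelForm (w : Fin m → ℝ) (τ : ℝ) (f : MvPolynomial (Fin m) K) :
    MvPolynomial (Fin m) 𝕜 :=
  ∑ u ∈ f.support.filter (fun u => P.val (coeff u f) + dotN w u = τ),
    monomial u (P.ic (coeff u f))

lemma coeff_levelForm (w : Fin m → ℝ) (τ : ℝ) (f : MvPolynomial (Fin m) K) (u : Fin m →₀ ℕ) :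
    coeff u (P.levelForm w τ f) = P.lc τ (dotN w u) (coeff u f) := by
  classical
  rw [levelForm, coeff_sum]
  simp only [coeff_monomial]
  rw [Finset.sum_ite_eq' (f.support.filter fun x => P.val (coeff x f) + dotN w x = τ) u
    (fun x => P.ic (coeff x f))]
  by_cases h : coeff u f ≠ 0 ∧ P.val (coeff u f) + dotN w u = τ
  · rw [if_pos (Finset.mem_filter.mpr ⟨mem_support_iff.mpr h.1, h.2⟩), P.lc_of_eq h.1 h.2]
  · rw [if_neg (fun hm => h ⟨mem_support_iff.mp (Finset.mem_filter.mp hm).1,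
      (Finset.mem_filter.mp hm).2⟩), P.lc_of_ne h]

lemma inF_eq_levelForm (w : Fin m → ℝ) (f : MvPolynomial (Fin m) K) :
    P.inF w f = P.levelForm w (P.ltrop f w) f := rfl

lemma coeff_inF (w : Fin m → ℝ) (f : MvPolynomial (Fin m) K) (u : Fin m →₀ ℕ) :
    coeff u (P.inF w f) = P.lc (P.ltrop f w) (dotN w u) (coeff u f) :=
  P.coeff_levelForm w _ f u

lemma lc_ne_zero {τ du : ℝ} {c : K} (h : P.lc τ du c ≠ 0) : c ≠ 0 ∧ P.val c + du = τ := by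
  by_contra hc
  exact h (P.lc_of_ne hc)

/-- Levels of `f` are all `≥ τ`. -/
def LevGE (w : Fin m → ℝ) (τ : ℝ) (f : MvPolynomial (Fin m) K) : Prop :=
  ∀ u, coeff u f = 0 ∨ τ ≤ P.val (coeff u f) + dotN w u

lemma levGE_of_trop (w : Fin m → ℝ) (f : MvPolynomial (Fin m) K) :
    P.LevGE w (P.ltrop f w) f := by
  intro u
  rcases eq_or_ne (coeff u f) 0 with h | h
  · exact Or.inl h
  · exact Or.inr (P.ltrop_le h)

lemma levGE_mono {w : Fin m → ℝ} {τ τ' : ℝ} (h : τ' ≤ τ) {f : MvPolynomial (Fin m) K}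
    (hf : P.LevGE w τ f) : P.LevGE w τ' f := by
  intro u
  rcases hf u with h0 | h0
  · exact Or.inl h0
  · exact Or.inr (le_trans h h0)

lemma levGE_add {w : Fin m → ℝ} {τ : ℝ} {f g : MvPolynomial (Fin m) K}
    (hf : P.LevGE w τ f) (hg : P.LevGE w τ g) : P.LevGE w τ (f + g) := by
  intro u
  rw [coeff_add]
  have h1 : coeff u f = 0 ∨ τ - dotN w u ≤ P.val (coeff u f) := by
    rcases hf u with h | h
    · exact Or.inl h
    · exact Or.inr (by linarith)
  have h2 : coeff u g = 0 ∨ τ - dotN w u ≤ P.val (coeff u g) := by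
    rcases hg u with h | h
    · exact Or.inl h
    · exact Or.inr (by linarith)
  have := P.val_add_ge h1 h2
  rcases this with h | h
  · exact Or.inl h
  · exact Or.inr (by linarith)

lemma levGE_const_mul {w : Fin m → ℝ} {τ : ℝ} {f : MvPolynomial (Fin m) K} {c : K}
    (hf : P.LevGE w τ f) : P.LevGE w (P.val c + τ) (C c * f) := by
  intro u
  rw [coeff_C_mul]
  rcases eq_or_ne c 0 with rfl | hc
  · exact Or.inl (zero_mul _)
  rcases eq_or_ne (coeff u f) 0 with h0 | h0
  · exact Or.inl (by rw [h0, mul_zero])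
  · right
    have hτ := (hf u).resolve_left h0
    rw [P.val_mul hc h0]
    linarith

lemma levelForm_zero (w : Fin m → ℝ) (τ : ℝ) : P.levelForm w τ (0 : MvPolynomial (Fin m) K) = 0 := by
  rw [levelForm]
  simp only [MvPolynomial.support_zero, Finset.filter_empty, Finset.sum_empty]

lemma levelForm_add {w : Fin m → ℝ} {τ : ℝ} {f g : MvPolynomial (Fin m) K}
    (hf : P.LevGE w τ f) (hg : P.LevGE w τ g) :
    P.levelForm w τ (f + g) = P.levelForm w τ f + P.levelForm w τ g := by
  apply MvPolynomial.ext
  intro u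
  rw [coeff_add, P.coeff_levelForm, P.coeff_levelForm, P.coeff_levelForm, coeff_add]
  exact P.lc_add (hf u) (hg u)

lemma levelForm_sum {w : Fin m → ℝ} {τ : ℝ} {α : Type*} (s : Finset α)
    (F : α → MvPolynomial (Fin m) K) (h : ∀ i ∈ s, P.LevGE w τ (F i)) :
    P.LevGE w τ (∑ i ∈ s, F i) ∧
      P.levelForm w τ (∑ i ∈ s, F i) = ∑ i ∈ s, P.levelForm w τ (F i) := by
  classical
  induction s using Finset.induction_on with
  | empty => exact ⟨by intro u; simp, by simp [P.levelForm_zero]⟩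
  | @insert a s' hx ih =>
      obtain ⟨ih1, ih2⟩ := ih (fun i hi => h i (Finset.mem_insert_of_mem hi))
      have ha := h a (Finset.mem_insert_self a s')
      rw [Finset.sum_insert hx, Finset.sum_insert hx]
      exact ⟨P.levGE_add ha ih1, by rw [P.levelForm_add ha ih1, ih2]⟩

lemma levelForm_const_mul {w : Fin m → ℝ} {τ : ℝ} {c : K} (hc : c ≠ 0)
    (f : MvPolynomial (Fin m) K) :
    P.levelForm w τ (C c * f) = P.ic c • P.levelForm w (τ - P.val c) f := by
  apply MvPolynomial.ext
  intro u
  rw [P.coeff_levelForm, coeff_C_mul, coeff_smul, P.coeff_levelForm, smul_eq_mul]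
  exact P.lc_const_mul c hc _

lemma levelForm_eq_zero_of_lt {w : Fin m → ℝ} {τ : ℝ} {f : MvPolynomial (Fin m) K}
    (h : ∀ u, coeff u f ≠ 0 → τ < P.val (coeff u f) + dotN w u) :
    P.levelForm w τ f = 0 := by
  apply MvPolynomial.ext
  intro u
  rw [P.coeff_levelForm, coeff_zero]
  refine P.lc_of_ne ?_
  rintro ⟨h0, hEq⟩
  exact absurd hEq (ne_of_gt (h u h0))

lemma inF_zero (w : Fin m → ℝ) : P.inF w (0 : MvPolynomial (Fin m) K) = 0 :=
  P.levelForm_zero w _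

lemma mem_support_inF {w : Fin m → ℝ} {f : MvPolynomial (Fin m) K} {u : Fin m →₀ ℕ} :
    u ∈ (P.inF w f).support ↔
      coeff u f ≠ 0 ∧ P.val (coeff u f) + dotN w u = P.ltrop f w := by
  rw [mem_support_iff, P.coeff_inF]
  constructor
  · exact fun h => P.lc_ne_zero h
  · rintro ⟨h1, h2⟩
    rw [P.lc_of_eq h1 h2]
    exact P.ic_ne_zero h1

lemma inF_ne_zero {f : MvPolynomial (Fin m) K} (hf : f ≠ 0) (w : Fin m → ℝ) :
    P.inF w f ≠ 0 := by
  obtain ⟨u, hu, hv⟩ := P.ltrop_attained hf w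
  intro h0
  have : u ∈ (P.inF w f).support := P.mem_support_inF.mpr ⟨hu, hv⟩
  rw [h0] at this
  simp at this

lemma inF_isHomogeneous {w : Fin m → ℝ} {f : MvPolynomial (Fin m) K} {d : ℕ}
    (hf : f.IsHomogeneous d) : (P.inF w f).IsHomogeneous d := by
  intro u hu
  exact hf ((P.lc_ne_zero (by rwa [P.coeff_inF] at hu)).1)

end PreVal
namespace PreVal

open MvPolynomial Finset

variable {K 𝕜 : Type} [Field K] [Field 𝕜] (P : PreVal K 𝕜) {m : ℕ}

theorem inF_mul {f g : MvPolynomial (Fin m) K} (hf : f ≠ 0) (hg : g ≠ 0) (w : Fin m → ℝ) :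
    P.ltrop (f * g) w = P.ltrop f w + P.ltrop g w ∧
      P.inF w (f * g) = P.inF w f * P.inF w g := by
  classical
  set τf := P.ltrop f w with hτf
  set τg := P.ltrop g w with hτg
  set τ := τf + τg with hτdef
  -- levels of all terms of the product
  have hterm : ∀ (u : Fin m →₀ ℕ) (p : (Fin m →₀ ℕ) × (Fin m →₀ ℕ)),
      p ∈ Finset.HasAntidiagonal.antidiagonal u →
      (coeff p.1 f * coeff p.2 g = 0 ∨
        τ - dotN w u ≤ P.val (coeff p.1 f * coeff p.2 g)) ∧
      ((coeff p.1 f ≠ 0 ∧ coeff p.2 g ≠ 0 ∧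
        ¬(P.val (coeff p.1 f) + dotN w p.1 = τf ∧ P.val (coeff p.2 g) + dotN w p.2 = τg)) →
        τ - dotN w u < P.val (coeff p.1 f * coeff p.2 g)) := by
    intro u p hp
    have hpu : p.1 + p.2 = u := Finset.HasAntidiagonal.mem_antidiagonal.mp hp
    have hdu : dotN w u = dotN w p.1 + dotN w p.2 := by rw [← hpu, dotN_add_right]
    constructor
    · rcases eq_or_ne (coeff p.1 f) 0 with h1 | h1
      · exact Or.inl (by rw [h1, zero_mul])
      rcases eq_or_ne (coeff p.2 g) 0 with h2 | h2
      · exact Or.inl (by rw [h2, mul_zero])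
      right
      have e1 := P.ltrop_le (w := w) h1
      have e2 := P.ltrop_le (w := w) h2
      rw [P.val_mul h1 h2]
      rw [hdu]
      linarith
    · rintro ⟨h1, h2, hne⟩
      have e1 := P.ltrop_le (w := w) h1
      have e2 := P.ltrop_le (w := w) h2
      have : τf < P.val (coeff p.1 f) + dotN w p.1 ∨ τg < P.val (coeff p.2 g) + dotN w p.2 := by
        by_contra hcon
        push_neg at hcon
        exact hne ⟨le_antisymm hcon.1 e1, le_antisymm hcon.2 e2⟩
      rw [P.val_mul h1 h2, hdu]
      rcases this with h | h <;> linarith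
  -- all levels of f*g are ≥ τ
  have hlev : P.LevGE w τ (f * g) := by
    intro u
    rw [coeff_mul]
    have := P.val_sum_ge (Finset.HasAntidiagonal.antidiagonal u)
      (fun p => coeff p.1 f * coeff p.2 g) (r := τ - dotN w u)
      (fun p hp => (hterm u p hp).1)
    rcases this with h | h
    · exact Or.inl h
    · exact Or.inr (by linarith)
  -- the key coefficient identity
  have key : ∀ u, coeff u (P.inF w f * P.inF w g)
      = P.lc τ (dotN w u) (coeff u (f * g)) := by
    intro u
    rw [coeff_mul, coeff_mul]
    set S0 := (Finset.HasAntidiagonal.antidiagonal u).filter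
      (fun p => (coeff p.1 f ≠ 0 ∧ P.val (coeff p.1 f) + dotN w p.1 = τf)
        ∧ (coeff p.2 g ≠ 0 ∧ P.val (coeff p.2 g) + dotN w p.2 = τg)) with hS0
    have lhs_eq : ∑ p ∈ Finset.HasAntidiagonal.antidiagonal u, coeff p.1 (P.inF w f) * coeff p.2 (P.inF w g)
        = ∑ p ∈ S0, P.ic (coeff p.1 f) * P.ic (coeff p.2 g) := by
      rw [hS0, Finset.sum_filter]
      refine Finset.sum_congr rfl fun p hp => ?_
      rw [P.coeff_inF, P.coeff_inF]
      by_cases h1 : coeff p.1 f ≠ 0 ∧ P.val (coeff p.1 f) + dotN w p.1 = τf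
      · by_cases h2 : coeff p.2 g ≠ 0 ∧ P.val (coeff p.2 g) + dotN w p.2 = τg
        · rw [P.lc_of_eq h1.1 h1.2, P.lc_of_eq h2.1 h2.2, if_pos ⟨h1, h2⟩]
        · rw [P.lc_of_ne h2, if_neg (fun hc => h2 hc.2), mul_zero]
      · rw [P.lc_of_ne h1, if_neg (fun hc => h1 hc.1), zero_mul]
    rw [lhs_eq]
    rcases Finset.eq_empty_or_nonempty S0 with hemp | ⟨p0, hp0⟩
    · -- no minimal pairs: product coefficient has level > τ
      rw [hemp, Finset.sum_empty]
      have hstrict : ∀ p ∈ Finset.HasAntidiagonal.antidiagonal u,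
          coeff p.1 f * coeff p.2 g = 0 ∨
            τ - dotN w u < P.val (coeff p.1 f * coeff p.2 g) := by
        intro p hp
        rcases eq_or_ne (coeff p.1 f) 0 with h1 | h1
        · exact Or.inl (by rw [h1, zero_mul])
        rcases eq_or_ne (coeff p.2 g) 0 with h2 | h2
        · exact Or.inl (by rw [h2, mul_zero])
        refine Or.inr ((hterm u p hp).2 ⟨h1, h2, ?_⟩)
        intro hc
        have : p ∈ S0 := by
          rw [hS0, Finset.mem_filter]
          exact ⟨hp, ⟨h1, hc.1⟩, ⟨h2, hc.2⟩⟩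
        rw [hemp] at this
        simp at this
      have := P.val_sum_gt (Finset.HasAntidiagonal.antidiagonal u)
        (fun p => coeff p.1 f * coeff p.2 g) hstrict
      rcases this with h | h
      · rw [h, P.lc_zero]
      · exact (P.lc_of_ne (by rintro ⟨-, hEq⟩; linarith)).symm
    · -- there is a minimal pair p0
      have hp0' := Finset.mem_filter.mp hp0
      obtain ⟨hp0mem, ⟨ha0, hva0⟩, ⟨hb0, hvb0⟩⟩ := hp0'
      set γ := -(P.val (coeff p0.1 f * coeff p0.2 g)) with hγdef
      have he0 : coeff p0.1 f * coeff p0.2 g ≠ 0 := mul_ne_zero ha0 hb0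
      have hγmem : γ ∈ P.SΓ := P.neg_mem_SΓ (P.val_mem_SΓ he0)
      have hdu : dotN w u = dotN w p0.1 + dotN w p0.2 := by
        rw [← Finset.HasAntidiagonal.mem_antidiagonal.mp hp0mem, dotN_add_right]
      have hγval : γ = dotN w u - τ := by
        rw [hγdef, P.val_mul ha0 hb0, hdu]
        linarith
      -- the filtered sum equals the residue of the scaled full sum
      have hres : P.res (P.t γ * ∑ p ∈ Finset.HasAntidiagonal.antidiagonal u, coeff p.1 f * coeff p.2 g)
          = ∑ p ∈ S0, P.ic (coeff p.1 f) * P.ic (coeff p.2 g) := by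
        rw [P.res_t_sum hγmem _ _ (fun p hp => by
          rcases (hterm u p hp).1 with h | h
          · exact Or.inl h
          · exact Or.inr (by rw [hγval]; linarith))]
        rw [hS0, Finset.sum_filter]
        refine Finset.sum_congr rfl fun p hp => ?_
        by_cases hc : (coeff p.1 f ≠ 0 ∧ P.val (coeff p.1 f) + dotN w p.1 = τf)
          ∧ (coeff p.2 g ≠ 0 ∧ P.val (coeff p.2 g) + dotN w p.2 = τg)
        · rw [if_pos hc]
          have hprod_ne : coeff p.1 f * coeff p.2 g ≠ 0 := mul_ne_zero hc.1.1 hc.2.1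
          have hvp : γ = -(P.val (coeff p.1 f * coeff p.2 g)) := by
            rw [P.val_mul hc.1.1 hc.2.1, hγval,
              ← Finset.HasAntidiagonal.mem_antidiagonal.mp hp, dotN_add_right]
            have := hc.1.2; have := hc.2.2
            linarith
          rw [P.res_t_eq_ic hvp, P.ic_mul]
        · rw [if_neg hc]
          rcases eq_or_ne (coeff p.1 f) 0 with h1 | h1
          · rw [h1, zero_mul, mul_zero, P.res_zero]
          rcases eq_or_ne (coeff p.2 g) 0 with h2 | h2
          · rw [h2, mul_zero, mul_zero, P.res_zero]
          have hprod_ne : coeff p.1 f * coeff p.2 g ≠ 0 := mul_ne_zero h1 h2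
          refine P.res_t_eq_zero hγmem hprod_ne ?_
          have hgt := (hterm u p hp).2 ⟨h1, h2, fun hcc => hc ⟨⟨h1, hcc.1⟩, ⟨h2, hcc.2⟩⟩⟩
          rw [hγval]
          linarith
      rw [← hres]
      -- now compare with lc
      rcases eq_or_ne (∑ p ∈ Finset.HasAntidiagonal.antidiagonal u, coeff p.1 f * coeff p.2 g) 0 with hz | hz
      · rw [hz, P.lc_zero, mul_zero, P.res_zero]
      · have hge : τ - dotN w u ≤ P.val (∑ p ∈ Finset.HasAntidiagonal.antidiagonal u, coeff p.1 f * coeff p.2 g) := by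
          have := P.val_sum_ge (Finset.HasAntidiagonal.antidiagonal u)
            (fun p => coeff p.1 f * coeff p.2 g) (r := τ - dotN w u)
            (fun p hp => (hterm u p hp).1)
          rcases this with h | h
          · exact absurd h hz
          · exact h
        rcases eq_or_lt_of_le hge with heq | hlt
        · have hγic : γ = -(P.val (∑ p ∈ Finset.HasAntidiagonal.antidiagonal u, coeff p.1 f * coeff p.2 g)) := by
            rw [hγval]; linarith
          rw [P.lc_of_eq hz (by linarith), ← P.res_t_eq_ic hγic]
        · rw [P.lc_of_ne (by rintro ⟨-, hEq⟩; linarith),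
            P.res_t_eq_zero hγmem hz (by rw [hγval]; linarith)]
  -- conclude
  have hfg : f * g ≠ 0 := mul_ne_zero hf hg
  have hFG : P.inF w f * P.inF w g ≠ 0 :=
    mul_ne_zero (P.inF_ne_zero hf w) (P.inF_ne_zero hg w)
  obtain ⟨u0, hu0⟩ := support_nonempty.mpr hFG
  have h0 := key u0
  rw [mem_support_iff] at hu0
  have hc0 := P.lc_ne_zero (h0 ▸ hu0)
  have htrop : P.ltrop (f * g) w = τ := by
    refine P.ltrop_eq ⟨u0, hc0.1, hc0.2⟩ fun u hu => ?_
    rcases hlev u with h | h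
    · exact absurd h hu
    · exact h
  refine ⟨htrop, ?_⟩
  apply MvPolynomial.ext
  intro u
  rw [P.coeff_inF, htrop, key u]

lemma ic_one : P.ic (1 : K) = 1 := by
  rw [ic, P.val_one, neg_zero, mul_one, P.t_zero, P.res_one]

lemma inF_monomial_one (w : Fin m → ℝ) (a : Fin m →₀ ℕ) :
    P.inF w (monomial a (1 : K)) = monomial a 1 := by
  classical
  have hm : (monomial a (1 : K)) ≠ 0 := by
    rw [Ne, MvPolynomial.monomial_eq_zero]
    exact one_ne_zero
  have htrop : P.ltrop (monomial a (1 : K)) w = dotN w a := by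
    refine P.ltrop_eq ⟨a, ?_, ?_⟩ ?_
    · rw [coeff_monomial, if_pos rfl]; exact one_ne_zero
    · rw [coeff_monomial, if_pos rfl, P.val_one, zero_add]
    · intro u hu
      rw [coeff_monomial] at hu
      by_cases h : a = u
      · subst h; rw [coeff_monomial, if_pos rfl, P.val_one, zero_add]
      · rw [if_neg h] at hu; exact absurd rfl hu
  apply MvPolynomial.ext
  intro u
  rw [P.coeff_inF, htrop, coeff_monomial, coeff_monomial]
  by_cases h : a = u
  · rw [if_pos h, if_pos h, P.lc_of_eq one_ne_zero (by rw [P.val_one, zero_add, h]), P.ic_one]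
  · rw [if_neg h, if_neg h, P.lc_zero]

lemma inF_monomial_mul (w : Fin m → ℝ) (a : Fin m →₀ ℕ) (f : MvPolynomial (Fin m) K) :
    P.inF w (monomial a 1 * f) = monomial a 1 * P.inF w f := by
  rcases eq_or_ne f 0 with rfl | hf
  · rw [mul_zero, P.inF_zero, mul_zero]
  have hm : (monomial a (1 : K)) ≠ 0 := by
    rw [Ne, MvPolynomial.monomial_eq_zero]; exact one_ne_zero
  rw [(P.inF_mul hm hf w).2, P.inF_monomial_one]

end PreVal
namespace PreVal

open MvPolynomial Finset

variable {K 𝕜 : Type} [Field K] [Field 𝕜] (P : PreVal K 𝕜) {m : ℕ}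

/-- Set of initial forms of elements of a set of polynomials. -/
def inFSet (w : Fin m → ℝ) (S : Set (MvPolynomial (Fin m) K)) :
    Set (MvPolynomial (Fin m) 𝕜) :=
  {g | ∃ f ∈ S, g = P.inF w f}

/-- The ideal generated by all initial forms of elements of an ideal equals
the `𝕜`-span of the same set, because the set of initial forms absorbs monomial
multiplication. -/
lemma span_inFSet_eq_kspan (w : Fin m → ℝ) (I : Ideal (MvPolynomial (Fin m) K)) :
    (Ideal.span (P.inFSet w (I : Set _)) : Set (MvPolynomial (Fin m) 𝕜)) =
      ↑(Submodule.span 𝕜 (P.inFSet w (I : Set _))) := by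
  classical
  apply Set.Subset.antisymm
  · intro x hx
    have hx' : x ∈ Submodule.span (MvPolynomial (Fin m) 𝕜) (P.inFSet w (I : Set _)) := hx
    obtain ⟨c, hsupp, hsum⟩ := Submodule.mem_span_set.mp hx'
    rw [← hsum]
    refine Submodule.sum_mem _ fun mi hmi => ?_
    -- c mi • mi ∈ kspan
    obtain ⟨f, hfI, rfl⟩ := hsupp hmi
    set r := c (P.inF w f) with hr
    show r • P.inF w f ∈ Submodule.span 𝕜 (P.inFSet w (I : Set _))
    have : r • P.inF w f = ∑ y ∈ r.support, (coeff y r) • (P.inF w (monomial y 1 * f)) := by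
      rw [smul_eq_mul]
      conv_lhs => rw [r.as_sum]
      rw [Finset.sum_mul]
      refine Finset.sum_congr rfl fun y hy => ?_
      rw [P.inF_monomial_mul, smul_eq_C_mul, ← mul_assoc, C_mul_monomial, mul_one]
    rw [this]
    refine Submodule.sum_mem _ fun y hy => Submodule.smul_mem _ _ (Submodule.subset_span ?_)
    exact ⟨monomial y 1 * f, Ideal.mul_mem_left I _ hfI, rfl⟩
  · intro x hx
    refine Submodule.span_induction ?_ ?_ ?_ ?_ hx
    · exact fun g hg => Ideal.subset_span hg
    · exact Ideal.zero_mem _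
    · exact fun a b _ _ ha hb => Ideal.add_mem _ ha hb
    · intro a g _ hg
      rw [smul_eq_C_mul]
      exact Ideal.mul_mem_left _ _ hg

/-- Homogeneous components of initial forms are again initial forms. -/
lemma homogeneousComponent_inF (w : Fin m → ℝ) (f : MvPolynomial (Fin m) K) (d : ℕ) :
    ∃ f' : MvPolynomial (Fin m) K,
      (f' = homogeneousComponent d f ∨ f' = 0) ∧
      homogeneousComponent d (P.inF w f) = P.inF w f' := by
  classical
  set fd := homogeneousComponent d f with hfd
  have hcfd : ∀ u, coeff u fd = if u.degree = d then coeff u f else 0 := fun u =>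
    coeff_homogeneousComponent d f u
  by_cases hcase : ∃ u : Fin m →₀ ℕ, u.degree = d ∧ coeff u f ≠ 0 ∧
      P.val (coeff u f) + dotN w u = P.ltrop f w
  · obtain ⟨u0, hu0d, hu0ne, hu0v⟩ := hcase
    have htrop : P.ltrop fd w = P.ltrop f w := by
      refine P.ltrop_eq ⟨u0, ?_, ?_⟩ ?_
      · rw [hcfd, if_pos hu0d]; exact hu0ne
      · rw [hcfd, if_pos hu0d]; exact hu0v
      · intro u hu
        rw [hcfd] at hu ⊢
        by_cases hd : u.degree = d
        · rw [if_pos hd] at hu ⊢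
          exact P.ltrop_le hu
        · rw [if_neg hd] at hu; exact absurd rfl hu
    refine ⟨fd, Or.inl rfl, ?_⟩
    apply MvPolynomial.ext
    intro u
    rw [coeff_homogeneousComponent, P.coeff_inF, P.coeff_inF, htrop, hcfd]
    by_cases hd : u.degree = d
    · rw [if_pos hd, if_pos hd]
    · rw [if_neg hd, if_neg hd, P.lc_zero]
  · refine ⟨0, Or.inr rfl, ?_⟩
    rw [P.inF_zero]
    apply MvPolynomial.ext
    intro u
    rw [coeff_homogeneousComponent, coeff_zero]
    by_cases hd : u.degree = d
    · rw [if_pos hd, P.coeff_inF]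
      refine P.lc_of_ne ?_
      rintro ⟨h1, h2⟩
      exact hcase ⟨u, hd, h1, h2⟩
    · rw [if_neg hd]

/-- Initial forms of elements of a submodule, as a set. -/
def inFSetM (w : Fin m → ℝ) (W : Submodule K (MvPolynomial (Fin m) K)) :
    Set (MvPolynomial (Fin m) 𝕜) :=
  {g | ∃ f ∈ W, g = P.inF w f}

/-- The degree-`d` K-subspace of an ideal. -/
def idealPiece (I : Ideal (MvPolynomial (Fin m) K)) (d : ℕ) :
    Submodule K (MvPolynomial (Fin m) K) :=
  (I.restrictScalars K) ⊓ homogeneousSubmodule (Fin m) K d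

lemma mem_idealPiece {I : Ideal (MvPolynomial (Fin m) K)} {d : ℕ} {f : MvPolynomial (Fin m) K} :
    f ∈ idealPiece I d ↔ f ∈ I ∧ f.IsHomogeneous d := by
  rw [idealPiece, Submodule.mem_inf, Submodule.restrictScalars_mem, mem_homogeneousSubmodule]

/-- Graded component of the span of initial forms. -/
lemma homogeneousComponent_mem_span (I : Ideal (MvPolynomial (Fin m) K))
    (hI : IsHomogIdeal I) (w : Fin m → ℝ) (d : ℕ) {x : MvPolynomial (Fin m) 𝕜}
    (hx : x ∈ Ideal.span (P.inFSet w (I : Set _))) :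
    homogeneousComponent d x ∈ Submodule.span 𝕜 (P.inFSetM w (idealPiece I d)) := by
  have hx' : x ∈ Submodule.span 𝕜 (P.inFSet w (I : Set _)) := by
    have := P.span_inFSet_eq_kspan w I
    rw [← SetLike.mem_coe, ← this]
    exact hx
  refine Submodule.span_induction ?_ ?_ ?_ ?_ hx'
  · rintro g ⟨f, hfI, rfl⟩
    obtain ⟨f', hf', heq⟩ := P.homogeneousComponent_inF w f d
    rw [heq]
    refine Submodule.subset_span ⟨f', ?_, rfl⟩
    rcases hf' with rfl | rfl
    · exact mem_idealPiece.mpr ⟨hI f hfI d, homogeneousComponent_isHomogeneous d f⟩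
    · exact Submodule.zero_mem _
  · rw [map_zero]; exact Submodule.zero_mem _
  · intro a b _ _ ha hb; rw [map_add]; exact Submodule.add_mem _ ha hb
  · intro a g _ hg; rw [map_smul]; exact Submodule.smul_mem _ _ hg

lemma isHomogeneous_eq_homogeneousComponent {x : MvPolynomial (Fin m) 𝕜} {d : ℕ}
    (hx : x.IsHomogeneous d) : homogeneousComponent d x = x := by
  apply MvPolynomial.ext
  intro u
  rw [coeff_homogeneousComponent]
  by_cases hd : u.degree = d
  · rw [if_pos hd]
  · rw [if_neg hd]
    rcases eq_or_ne (coeff u x) 0 with h | h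
    · exact h.symm
    · exact absurd (show u.degree = d by
        rw [Finsupp.degree_eq_weight_one]; exact hx h) hd

/-- The degree-`d` piece of the initial ideal is spanned by initial forms of
degree-`d` elements of `I`. -/
lemma piece_eq (I : Ideal (MvPolynomial (Fin m) K)) (hI : IsHomogIdeal I) (w : Fin m → ℝ)
    (d : ℕ) :
    (Ideal.span (P.inFSet w (I : Set _))).restrictScalars 𝕜 ⊓
        homogeneousSubmodule (Fin m) 𝕜 d
      = Submodule.span 𝕜 (P.inFSetM w (idealPiece I d)) := by
  apply le_antisymm
  · rintro x hx
    rw [Submodule.mem_inf] at hx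
    obtain ⟨hx1, hx2⟩ := hx
    have := P.homogeneousComponent_mem_span I hI w d hx1
    rwa [isHomogeneous_eq_homogeneousComponent ((mem_homogeneousSubmodule _ _).mp hx2)]
      at this
  · rw [Submodule.span_le]
    rintro g ⟨f, hf, rfl⟩
    rw [mem_idealPiece] at hf
    rw [SetLike.mem_coe, Submodule.mem_inf]
    constructor
    · exact Ideal.subset_span ⟨f, hf.1, rfl⟩
    · exact (mem_homogeneousSubmodule _ _).mpr (P.inF_isHomogeneous hf.2)

/-- The span of initial forms of elements of a homogeneous ideal is homogeneous. -/
lemma isHomogIdeal_span_inFSet (I : Ideal (MvPolynomial (Fin m) K)) (hI : IsHomogIdeal I)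
    (w : Fin m → ℝ) : IsHomogIdeal (Ideal.span (P.inFSet w (I : Set _))) := by
  intro x hx d
  have h1 := P.homogeneousComponent_mem_span I hI w d hx
  have h2 : Submodule.span 𝕜 (P.inFSetM w (idealPiece I d)) ≤
      (Ideal.span (P.inFSet w (I : Set _))).restrictScalars 𝕜 := by
    rw [Submodule.span_le]
    rintro g ⟨f, hf, rfl⟩
    exact Ideal.subset_span ⟨f, (mem_idealPiece.mp hf).1, rfl⟩
  exact h2 h1

end PreVal
open MvPolynomial in
lemma monomials_degree_finite (m d : ℕ) : {u : Fin m →₀ ℕ | u.degree = d}.Finite := by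
  apply Set.Finite.subset (Set.finite_Iic (Finsupp.equivFunOnFinite.symm (fun _ => d)))
  intro u hu
  simp only [Set.mem_Iic, Finsupp.le_def]
  intro i
  calc u i ≤ u.degree := Finsupp.le_degree i u
  _ = d := hu

open MvPolynomial in
lemma finiteDimensional_homogeneousSubmodule (R : Type) [Field R] (m d : ℕ) :
    FiniteDimensional R (homogeneousSubmodule (Fin m) R d) := by
  classical
  have hfin : ((fun u => (monomial u 1 : MvPolynomial (Fin m) R)) '' {u | u.degree = d}).Finite :=
    (monomials_degree_finite m d).image _
  haveI := FiniteDimensional.span_of_finite R hfin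
  refine Submodule.finiteDimensional_of_le (S₂ := Submodule.span R
    ((fun u => (monomial u 1 : MvPolynomial (Fin m) R)) '' {u | u.degree = d})) ?_
  intro f hf
  rw [mem_homogeneousSubmodule] at hf
  have hrepr : f = ∑ u ∈ f.support, (coeff u f) • (monomial u 1 : MvPolynomial (Fin m) R) := by
    conv_lhs => rw [f.as_sum]
    refine Finset.sum_congr rfl fun u hu => ?_
    rw [smul_monomial, smul_eq_mul, mul_one]
  rw [hrepr]
  refine Submodule.sum_mem _ fun u hu => Submodule.smul_mem _ _ (Submodule.subset_span ?_)
  refine ⟨u, ?_, rfl⟩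
  rw [Set.mem_setOf_eq, Finsupp.degree_eq_weight_one]
  exact hf (mem_support_iff.mp hu)

namespace PreVal

open MvPolynomial Finset

variable {K 𝕜 : Type} [Field K] [Field 𝕜] (P : PreVal K 𝕜) {m : ℕ}

lemma span_inFSetM_le_homog {w : Fin m → ℝ} {d : ℕ} {W : Submodule K (MvPolynomial (Fin m) K)}
    (hW : W ≤ homogeneousSubmodule (Fin m) K d) :
    Submodule.span 𝕜 (P.inFSetM w W) ≤ homogeneousSubmodule (Fin m) 𝕜 d := by
  rw [Submodule.span_le]
  rintro g ⟨f, hf, rfl⟩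
  exact (mem_homogeneousSubmodule _ _).mpr
    (P.inF_isHomogeneous ((mem_homogeneousSubmodule _ _).mp (hW hf)))

set_option maxHeartbeats 1000000
set_option synthInstance.maxHeartbeats 400000

lemma fd_span_inFSetM {w : Fin m → ℝ} {d : ℕ} {W : Submodule K (MvPolynomial (Fin m) K)}
    (hW : W ≤ homogeneousSubmodule (Fin m) K d) :
    FiniteDimensional 𝕜 (Submodule.span 𝕜 (P.inFSetM w W)) := by
  haveI := finiteDimensional_homogeneousSubmodule 𝕜 m d
  exact Submodule.finiteDimensional_of_le (P.span_inFSetM_le_homog hW)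

/-- Gaussian elimination: the span of initial forms of a `W ≤ (deg-d homog)` has
`𝕜`-dimension at least `dim_K W`. -/
theorem gauss (w : Fin m → ℝ) (d : ℕ) :
    ∀ (r : ℕ) (W : Submodule K (MvPolynomial (Fin m) K)),
      W ≤ homogeneousSubmodule (Fin m) K d →
      r ≤ Module.finrank K W →
      r ≤ Module.finrank 𝕜 (Submodule.span 𝕜 (P.inFSetM w W)) := by
  classical
  intro r
  induction r with
  | zero => intro W _ _; exact Nat.zero_le _
  | succ r ih =>
      intro W hW hr
      haveI : FiniteDimensional K (homogeneousSubmodule (Fin m) K d) :=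
        finiteDimensional_homogeneousSubmodule K m d
      haveI hWfd : FiniteDimensional K W := Submodule.finiteDimensional_of_le hW
      -- W contains a nonzero element
      have hWne : W ≠ ⊥ := by
        intro h0
        rw [h0, finrank_bot] at hr
        omega
      obtain ⟨f1, hf1W, hf1ne⟩ := (Submodule.ne_bot_iff W).mp hWne
      obtain ⟨u1, hu1ne, hu1v⟩ := P.ltrop_attained hf1ne w
      -- the hyperplane W' of W where the u1-coefficient vanishes
      set W' := W ⊓ LinearMap.ker (MvPolynomial.lcoeff K u1) with hW'
      have hW'leW : W' ≤ W := inf_le_left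
      have hW'le : W' ≤ homogeneousSubmodule (Fin m) K d := le_trans hW'leW hW
      -- finrank W' ≥ r
      have hrW' : r ≤ Module.finrank K W' := by
        set ψ : W →ₗ[K] K := (MvPolynomial.lcoeff K u1).comp W.subtype with hψ
        have hker : Submodule.comap W.subtype W' = LinearMap.ker ψ := by
          ext x
          simp only [Submodule.mem_comap, hW', Submodule.mem_inf, LinearMap.mem_ker, hψ,
            LinearMap.comp_apply, Submodule.coe_subtype]
          constructor
          · rintro ⟨-, h⟩; exact h
          · intro h; exact ⟨x.2, h⟩
        have heq : Module.finrank K W' = Module.finrank K (LinearMap.ker ψ) := by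
          rw [← hker]
          exact (Submodule.comapSubtypeEquivOfLe hW'leW).finrank_eq.symm
        have hrn := LinearMap.finrank_range_add_finrank_ker ψ
        have hrange : Module.finrank K (LinearMap.range ψ) ≤ 1 := by
          have h1 : Module.finrank K (LinearMap.range ψ) ≤ Module.finrank K K :=
            Submodule.finrank_le _
          rwa [Module.finrank_self] at h1
        omega
      have ihW' := ih W' hW'le hrW'
      -- x1 = inF w f1 has nonzero u1-coefficient
      set x1 := P.inF w f1 with hx1
      have hx1coeff : coeff u1 x1 ≠ 0 := by
        rw [hx1, P.coeff_inF, P.lc_of_eq hu1ne hu1v]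
        exact P.ic_ne_zero hu1ne
      have hx1ne : x1 ≠ 0 := fun h0 => hx1coeff (by rw [h0, coeff_zero])
      have hx1mem : x1 ∈ Submodule.span 𝕜 (P.inFSetM w W) :=
        Submodule.subset_span ⟨f1, hf1W, rfl⟩
      -- span of initial forms of W' lies in the coefficient hyperplane
      have hker𝕜 : Submodule.span 𝕜 (P.inFSetM w W') ≤ LinearMap.ker (MvPolynomial.lcoeff 𝕜 u1) := by
        rw [Submodule.span_le]
        rintro g ⟨f, hf, rfl⟩
        have hcf : coeff u1 f = 0 := (Submodule.mem_inf.mp hf).2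
        rw [SetLike.mem_coe, LinearMap.mem_ker]
        show coeff u1 (P.inF w f) = 0
        rw [P.coeff_inF, hcf, P.lc_zero]
      -- the sup has dimension ≥ r + 1
      haveI fd1 : FiniteDimensional 𝕜 (Submodule.span 𝕜 (P.inFSetM w W)) := P.fd_span_inFSetM hW
      haveI fd2 : FiniteDimensional 𝕜 (Submodule.span 𝕜 (P.inFSetM w W')) := P.fd_span_inFSetM hW'le
      haveI fd3 : FiniteDimensional 𝕜 (Submodule.span 𝕜 ({x1} : Set (MvPolynomial (Fin m) 𝕜))) :=
        FiniteDimensional.span_of_finite 𝕜 (Set.finite_singleton x1)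
      have hinf : Submodule.span 𝕜 (P.inFSetM w W') ⊓ Submodule.span 𝕜 {x1} = ⊥ := by
        rw [eq_bot_iff]
        intro y hy
        rw [Submodule.mem_inf] at hy
        obtain ⟨hy1, hy2⟩ := hy
        obtain ⟨a, rfl⟩ := Submodule.mem_span_singleton.mp hy2
        have : coeff u1 (a • x1) = 0 := hker𝕜 hy1
        rw [coeff_smul, smul_eq_mul] at this
        rcases mul_eq_zero.mp this with h | h
        · rw [h, zero_smul]
          exact Submodule.zero_mem _
        · exact absurd h hx1coeff
      have hsup_le : Submodule.span 𝕜 (P.inFSetM w W') ⊔ Submodule.span 𝕜 {x1}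
          ≤ Submodule.span 𝕜 (P.inFSetM w W) := by
        refine sup_le ?_ ?_
        · exact Submodule.span_mono (fun g => by
            rintro ⟨f, hf, rfl⟩; exact ⟨f, hW'leW hf, rfl⟩)
        · rw [Submodule.span_le, Set.singleton_subset_iff]
          exact hx1mem
      have hdim : Module.finrank 𝕜 ↥(Submodule.span 𝕜 (P.inFSetM w W') ⊔ Submodule.span 𝕜 {x1})
          = Module.finrank 𝕜 (Submodule.span 𝕜 (P.inFSetM w W')) + 1 := by
        have := Submodule.finrank_sup_add_finrank_inf_eq
          (Submodule.span 𝕜 (P.inFSetM w W')) (Submodule.span 𝕜 {x1})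
        rw [hinf, finrank_bot, finrank_span_singleton hx1ne] at this
        omega
      calc r + 1 ≤ Module.finrank 𝕜 (Submodule.span 𝕜 (P.inFSetM w W')) + 1 := by omega
    _ = Module.finrank 𝕜 ↥(Submodule.span 𝕜 (P.inFSetM w W') ⊔ Submodule.span 𝕜 {x1}) := hdim.symm
    _ ≤ Module.finrank 𝕜 (Submodule.span 𝕜 (P.inFSetM w W)) := Submodule.finrank_mono hsup_le

end PreVal
namespace PreVal

open MvPolynomial Finset

variable {K 𝕜 : Type} [Field K] [Field 𝕜] (P : PreVal K 𝕜) {m : ℕ}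

/-- The relation trick: a `𝕜`-linearly independent family of initial forms of elements of `W`
lifts to a `K`-linearly independent family in `W`; hence the span of initial forms has
dimension at most `dim_K W`. -/
theorem finrank_span_inFSetM_le (w : Fin m → ℝ) (d : ℕ)
    (W : Submodule K (MvPolynomial (Fin m) K)) (hW : W ≤ homogeneousSubmodule (Fin m) K d) :
    Module.finrank 𝕜 (Submodule.span 𝕜 (P.inFSetM w W)) ≤ Module.finrank K W := by
  classical
  haveI : FiniteDimensional K (homogeneousSubmodule (Fin m) K d) :=
    finiteDimensional_homogeneousSubmodule K m d
  haveI hWfd : FiniteDimensional K W := Submodule.finiteDimensional_of_le hW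
  haveI fd1 : FiniteDimensional 𝕜 (Submodule.span 𝕜 (P.inFSetM w W)) := P.fd_span_inFSetM hW
  obtain ⟨b, hb_sub, hb_span, hb_ind⟩ := exists_linearIndependent 𝕜 (P.inFSetM w W)
  -- b is finite
  have hb_fin : b.Finite := by
    rw [← Cardinal.lt_aleph0_iff_set_finite, ← rank_span_set hb_ind, hb_span]
    exact Module.rank_lt_aleph0 𝕜 _
  haveI : Fintype ↑b := hb_fin.fintype
  -- choose preimages
  have hchoice : ∀ x : b, ∃ f, f ∈ W ∧ (x : MvPolynomial (Fin m) 𝕜) = P.inF w f := by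
    intro x
    obtain ⟨f, hf, heq⟩ := hb_sub x.2
    exact ⟨f, hf, heq⟩
  choose F hFW hFx using hchoice
  -- the preimages form a K-linearly independent family
  have key : LinearIndependent K F := by
    rw [linearIndependent_iff']
    intro s g hsum i0 hi0
    by_contra hg0
    set s' := s.filter (fun i => g i ≠ 0) with hs'
    have hs'ne : s'.Nonempty := ⟨i0, Finset.mem_filter.mpr ⟨hi0, hg0⟩⟩
    have hgne : ∀ i ∈ s', g i ≠ 0 := fun i hi => (Finset.mem_filter.mp hi).2
    have hFne : ∀ i : b, F i ≠ 0 := by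
      intro i h0
      have hne : (i : MvPolynomial (Fin m) 𝕜) ≠ 0 := hb_ind.ne_zero i
      rw [hFx i, h0, P.inF_zero] at hne
      exact hne rfl
    have hs'img : (s'.image (fun i => P.val (g i) + P.ltrop (F i) w)).Nonempty :=
      hs'ne.image _
    set τ := (s'.image (fun i => P.val (g i) + P.ltrop (F i) w)).min' hs'img with hτ
    have hτ_le : ∀ i ∈ s', τ ≤ P.val (g i) + P.ltrop (F i) w := fun i hi =>
      Finset.min'_le _ _ (Finset.mem_image_of_mem _ hi)
    obtain ⟨i1, hi1, hi1v⟩ : ∃ i ∈ s', P.val (g i) + P.ltrop (F i) w = τ := by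
      have hmem := Finset.min'_mem _ hs'img
      rw [Finset.mem_image] at hmem
      obtain ⟨i, hi, hv⟩ := hmem
      exact ⟨i, hi, hv⟩
    have hsum' : ∑ i ∈ s', C (g i) * F i = 0 := by
      have h1 : ∑ i ∈ s', g i • F i = ∑ i ∈ s, g i • F i :=
        Finset.sum_filter_of_ne (fun i _ hne => by
          intro h0; rw [h0, zero_smul] at hne; exact hne rfl)
      rw [← hsum, ← h1]
      exact Finset.sum_congr rfl fun i _ => (smul_eq_C_mul _ _).symm
    have hlev : ∀ i ∈ s', P.LevGE w τ (C (g i) * F i) := fun i hi =>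
      P.levGE_mono (hτ_le i hi) (P.levGE_const_mul (P.levGE_of_trop w (F i)))
    have h0 := (P.levelForm_sum s' (fun i => C (g i) * F i) hlev).2
    rw [hsum', P.levelForm_zero] at h0
    have hterm : ∀ i ∈ s', P.levelForm w τ (C (g i) * F i)
        = if P.val (g i) + P.ltrop (F i) w = τ
          then P.ic (g i) • (i : MvPolynomial (Fin m) 𝕜) else 0 := by
      intro i hi
      rw [P.levelForm_const_mul (hgne i hi)]
      by_cases hc : P.val (g i) + P.ltrop (F i) w = τ
      · rw [if_pos hc, show τ - P.val (g i) = P.ltrop (F i) w by linarith,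
          ← P.inF_eq_levelForm, ← hFx i]
      · rw [if_neg hc]
        have hlt : τ - P.val (g i) < P.ltrop (F i) w :=
          lt_of_le_of_ne (by linarith [hτ_le i hi]) (by
            intro h; exact hc (by linarith))
        rw [P.levelForm_eq_zero_of_lt (fun u hu => lt_of_lt_of_le hlt (P.ltrop_le hu)),
          smul_zero]
    rw [Finset.sum_congr rfl hterm] at h0
    rw [← Finset.sum_filter] at h0
    have hfinal := linearIndependent_iff'.mp hb_ind
      (s'.filter (fun i => P.val (g i) + P.ltrop (F i) w = τ))
      (fun i => P.ic (g i)) (h0.symm) i1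
      (Finset.mem_filter.mpr ⟨hi1, hi1v⟩)
    exact P.ic_ne_zero (hgne i1 hi1) hfinal
  -- conclude by counting
  have hcard : Module.finrank 𝕜 (Submodule.span 𝕜 (P.inFSetM w W)) = Fintype.card ↑b := by
    rw [← hb_span, finrank_span_set_eq_card hb_ind, Set.toFinset_card]
  rw [hcard]
  -- lift F into W
  have keyW : LinearIndependent K (fun i : b => (⟨F i, hFW i⟩ : W)) := by
    apply LinearIndependent.of_comp W.subtype
    exact key
  exact keyW.fintype_card_le_finrank

end PreVal
namespace ValSetup

open MvPolynomial Finset PreVal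

variable {K 𝕜 : Type} [Field K] [Field 𝕜] (V : ValSetup K 𝕜) {m : ℕ}

lemma lift_exists (a : 𝕜) (ha : a ≠ 0) :
    ∃ l : K, l ≠ 0 ∧ (PreVal.ofVal V).val l = 0 ∧ (PreVal.ofVal V).res l = a := by
  obtain ⟨l, hl, hres⟩ := V.res_surjective a
  have hlne : l ≠ 0 := by
    rintro rfl
    rw [V.res_zero] at hres
    exact ha hres.symm
  have hval : 0 ≤ V.val l := hl.resolve_left hlne
  have hnlt : ¬(0 < V.val l) := fun h =>
    ha (by rw [← hres]; exact (V.res_eq_zero_iff hlne hval).mpr h)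
  exact ⟨l, hlne, le_antisymm (not_lt.mp hnlt) hval, hres⟩

/-- Every element of the span of initial forms of a (not nec. homogeneous) ideal is itself an
initial form of an element of the ideal, provided `w ∈ Γ^m`. -/
theorem exists_inF_of_mem_span (I : Ideal (MvPolynomial (Fin m) K)) {w : Fin m → ℝ}
    (hw : ∀ i, w i ∈ (PreVal.ofVal V).SΓ) {g : MvPolynomial (Fin m) 𝕜}
    (hg : g ∈ Submodule.span 𝕜 ((PreVal.ofVal V).inFSet w (I : Set _))) :
    ∃ f ∈ I, g = (PreVal.ofVal V).inF w f := by
  classical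
  set P : PreVal K 𝕜 := PreVal.ofVal V with hP
  obtain ⟨c, hsupp, hsum⟩ := Submodule.mem_span_set.mp hg
  -- choose a preimage for each element of the support
  have hchoice : ∀ mi : c.support, ∃ f, f ∈ I ∧ (mi : MvPolynomial (Fin m) 𝕜) = P.inF w f :=
    fun mi => by
      obtain ⟨f, hf, heq⟩ := hsupp mi.2
      exact ⟨f, hf, heq⟩
  choose Ff hFfI hFfx using hchoice
  -- scale factors
  have hbij : ∀ mi : c.support, ∃ bmi : K,
      (Ff mi ≠ 0 → bmi ≠ 0 ∧ P.val bmi = -(P.ltrop (Ff mi) w) ∧ P.ic bmi = c mi) := by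
    intro mi
    rcases eq_or_ne (Ff mi) 0 with h0 | hne
    · exact ⟨0, fun h => absurd h0 h⟩
    · have hcne : c (mi : MvPolynomial (Fin m) 𝕜) ≠ 0 := Finsupp.mem_support_iff.mp mi.2
      obtain ⟨l, hl, hlval, hlres⟩ := V.lift_exists (c mi) hcne
      set τ := P.ltrop (Ff mi) w with hτ
      have hτmem : τ ∈ P.SΓ := P.ltrop_mem_SΓ hne hw
      have htne : P.t (-τ) ≠ 0 := P.t_ne_zero (P.neg_mem_SΓ hτmem)
      refine ⟨l * P.t (-τ), fun _ => ⟨mul_ne_zero hl htne, ?_, ?_⟩⟩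
      · rw [P.val_mul hl htne, hlval, P.val_t (P.neg_mem_SΓ hτmem), zero_add]
      · -- ic (l * t^{-τ}) = res l = c mi
        have hval : -(P.val (l * P.t (-τ))) = τ := by
          rw [P.val_mul hl htne, hlval, P.val_t (P.neg_mem_SΓ hτmem)]
          ring
        rw [ic, hval, show P.t τ * (l * P.t (-τ)) = (P.t τ * P.t (-τ)) * l by ring,
          P.t_mul_t_neg hτmem, one_mul]
        exact hlres
  choose bco hbco using hbij
  -- the global element F of I
  set F : MvPolynomial (Fin m) K :=
    ∑ mi ∈ c.support.attach, C (bco mi) * Ff mi with hF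
  have hFI : F ∈ I := Submodule.sum_mem _ fun mi _ =>
    Ideal.mul_mem_left _ _ (hFfI mi)
  -- each term has levels ≥ 0 and level-0 part (c mi) • mi
  have hterm : ∀ mi : c.support, P.LevGE w 0 (C (bco mi) * Ff mi) ∧
      P.levelForm w 0 (C (bco mi) * Ff mi) = (c mi) • (mi : MvPolynomial (Fin m) 𝕜) := by
    intro mi
    rcases eq_or_ne (Ff mi) 0 with h0 | hne
    · constructor
      · rw [h0, mul_zero]
        intro u
        exact Or.inl (coeff_zero u)
      · rw [h0, mul_zero, P.levelForm_zero, hFfx mi, h0, P.inF_zero, smul_zero]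
    · obtain ⟨hbne, hbval, hbic⟩ := hbco mi hne
      constructor
      · have h1 := P.levGE_const_mul (c := bco mi) (P.levGE_of_trop w (Ff mi))
        have h2 : P.val (bco mi) + P.ltrop (Ff mi) w = 0 := by rw [hbval]; ring
        rwa [h2] at h1
      · rw [P.levelForm_const_mul hbne, hbic,
          show (0 : ℝ) - P.val (bco mi) = P.ltrop (Ff mi) w by rw [hbval]; ring,
          ← P.inF_eq_levelForm, ← hFfx mi]
  -- level-0 part of F is g
  have hlev : P.LevGE w 0 F := by
    rw [hF]
    exact (P.levelForm_sum c.support.attach _ (fun mi _ => (hterm mi).1)).1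
  have hlf : P.levelForm w 0 F = g := by
    rw [hF, (P.levelForm_sum c.support.attach _ (fun mi _ => (hterm mi).1)).2]
    rw [Finset.sum_congr rfl (fun mi _ => (hterm mi).2)]
    rw [← hsum, Finsupp.sum, ← Finset.sum_attach c.support (fun mi => c mi • mi)]
  rcases eq_or_ne g 0 with rfl | hgne
  · exact ⟨0, Submodule.zero_mem _, (P.inF_zero w).symm⟩
  · have hFne : F ≠ 0 := by
      intro h0
      rw [h0, P.levelForm_zero] at hlf

      exact hgne hlf.symm
    -- the tropicalization of F is 0
    obtain ⟨u0, hu0⟩ := support_nonempty.mpr hgne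
    rw [mem_support_iff] at hu0
    have hc0 : coeff u0 F ≠ 0 ∧ P.val (coeff u0 F) + dotN w u0 = 0 := by
      apply P.lc_ne_zero
      rw [← P.coeff_levelForm w 0 F u0, hlf]
      exact hu0
    have htrop : P.ltrop F w = 0 := by
      refine P.ltrop_eq ⟨u0, hc0⟩ fun u hu => ?_
      rcases hlev u with h | h
      · exact absurd h hu
      · exact h
    refine ⟨F, hFI, ?_⟩
    rw [P.inF_eq_levelForm, htrop, hlf]

end ValSetup
namespace PreVal

open MvPolynomial Finset

variable {K 𝕜 : Type} [Field K] [Field 𝕜] (P : PreVal K 𝕜) {m : ℕ}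

lemma triv_val_eq_zero (x : 𝕜) : (PreVal.triv 𝕜).val x = 0 := rfl

/-- For each polynomial `f` there is `ε₀ > 0` such that for all `0 < ε < ε₀`,
`in_v(in_w(f)) = in_{w+εv}(f)`. -/
theorem exists_eps (w v : Fin m → ℝ) (f : MvPolynomial (Fin m) K) :
    ∃ ε₀ : ℝ, 0 < ε₀ ∧ ∀ ε : ℝ, 0 < ε → ε < ε₀ →
      (PreVal.triv 𝕜).inF v (P.inF w f) = P.inF (w + ε • v) f := by
  classical
  rcases eq_or_ne f 0 with rfl | hf
  · exact ⟨1, one_pos, fun ε _ _ => by rw [P.inF_zero, (PreVal.triv 𝕜).inF_zero, P.inF_zero]⟩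
  have hsupp : f.support.Nonempty := support_nonempty.mpr hf
  set τ := P.ltrop f w with hτ
  set Mw := f.support.filter (fun u => P.val (coeff u f) + dotN w u = τ) with hMw
  have hMwne : Mw.Nonempty := by
    obtain ⟨u, hu, hv⟩ := P.ltrop_attained hf w
    exact ⟨u, Finset.mem_filter.mpr ⟨mem_support_iff.mpr hu, hv⟩⟩
  set tv := (Mw.image (fun u => dotN v u)).min' (hMwne.image _) with htv
  set Mv := Mw.filter (fun u => dotN v u = tv) with hMv
  have hMvne : Mv.Nonempty := by
    have hmem := Finset.min'_mem _ (hMwne.image (fun u => dotN v u))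
    rw [Finset.mem_image] at hmem
    obtain ⟨u, hu, hv⟩ := hmem
    exact ⟨u, Finset.mem_filter.mpr ⟨hu, hv⟩⟩
  have htv_le : ∀ u ∈ Mw, tv ≤ dotN v u := fun u hu =>
    Finset.min'_le _ _ (Finset.mem_image_of_mem _ hu)
  -- gap δ
  set Sneg := f.support.filter (fun u => ¬ (P.val (coeff u f) + dotN w u = τ)) with hSneg
  set δ : ℝ := if h : Sneg.Nonempty
    then (Sneg.image (fun u => P.val (coeff u f) + dotN w u - τ)).min' (h.image _) else 1
    with hδ
  have hδpos : 0 < δ := by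
    rw [hδ]
    split_ifs with h
    · have hmem := Finset.min'_mem _ (h.image (fun u => P.val (coeff u f) + dotN w u - τ))
      rw [Finset.mem_image] at hmem
      obtain ⟨u, hu, hv⟩ := hmem
      rw [← hv]
      obtain ⟨huS, hune⟩ := Finset.mem_filter.mp hu
      have := P.ltrop_le (w := w) (mem_support_iff.mp huS)
      have hlt : τ < P.val (coeff u f) + dotN w u := lt_of_le_of_ne this (Ne.symm hune)
      linarith
    · exact one_pos
  have hδ_le : ∀ u ∈ f.support, u ∉ Mw → τ + δ ≤ P.val (coeff u f) + dotN w u := by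
    intro u hu hun
    have hne : ¬ (P.val (coeff u f) + dotN w u = τ) := fun h =>
      hun (Finset.mem_filter.mpr ⟨hu, h⟩)
    have huS : u ∈ Sneg := Finset.mem_filter.mpr ⟨hu, hne⟩
    have hS : Sneg.Nonempty := ⟨u, huS⟩
    have := Finset.min'_le (Sneg.image (fun u => P.val (coeff u f) + dotN w u - τ))
      _ (Finset.mem_image_of_mem _ huS)
    rw [hδ, dif_pos hS]
    linarith [this]
  -- bound B
  set B := (f.support.image (fun u => |dotN v u|)).max' (hsupp.image _) with hB
  have hB_le : ∀ u ∈ f.support, |dotN v u| ≤ B := by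
    intro u hu
    rw [hB]
    exact Finset.le_max' (f.support.image (fun u => |dotN v u|)) (|dotN v u|)
      (Finset.mem_image_of_mem (fun u => |dotN v u|) hu)
  have hBnn : 0 ≤ B := by
    obtain ⟨u, hu⟩ := hsupp
    exact le_trans (abs_nonneg _) (hB_le u hu)
  have htvB : |tv| ≤ B := by
    obtain ⟨u, hu⟩ := hMvne
    obtain ⟨huMw, hud⟩ := Finset.mem_filter.mp hu
    rw [← hud]
    exact hB_le u (Finset.mem_filter.mp huMw).1
  refine ⟨δ / (2 * B + 1), div_pos hδpos (by linarith), ?_⟩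
  intro ε hε hεlt
  have hεB : ε * (2 * B) < δ := by
    have h1 : ε * (2 * B + 1) < δ := by
      have := (lt_div_iff₀ (show (0:ℝ) < 2*B+1 by linarith)).mp hεlt
      linarith
    nlinarith
  -- the levels at w + ε v
  set w' := w + ε • v with hw'
  have hlvl' : ∀ u, P.val (coeff u f) + dotN w' u
      = (P.val (coeff u f) + dotN w u) + ε * dotN v u := by
    intro u
    rw [hw', dotN_weights]
    ring
  -- strict comparison for u ∈ Mv vs u' ∈ supp
  have hcomp : ∀ u' ∈ f.support,
      (τ + ε * tv ≤ P.val (coeff u' f) + dotN w' u') ∧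
      ((P.val (coeff u' f) + dotN w' u' = τ + ε * tv) ↔ u' ∈ Mv) := by
    intro u' hu'
    by_cases hMem : u' ∈ Mw
    · have hlv : P.val (coeff u' f) + dotN w u' = τ := (Finset.mem_filter.mp hMem).2
      have htle := htv_le u' hMem
      constructor
      · rw [hlvl', hlv]
        nlinarith
      · constructor
        · intro h
          rw [hlvl', hlv] at h
          have : dotN v u' = tv := by
            have := mul_left_cancel₀ (ne_of_gt hε) (by linarith : ε * dotN v u' = ε * tv)
            exact this
          exact Finset.mem_filter.mpr ⟨hMem, this⟩
        · intro h
          rw [hlvl', hlv, (Finset.mem_filter.mp h).2]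
    · have hge := hδ_le u' hu' hMem
      have habs := hB_le u' hu'
      have h1 : τ + ε * tv < P.val (coeff u' f) + dotN w' u' := by
        rw [hlvl']
        have h2 : ε * dotN v u' ≥ -(ε * B) := by nlinarith [abs_le.mp habs]
        have h3 : ε * tv ≤ ε * B := by nlinarith [abs_le.mp htvB]
        nlinarith
      constructor
      · exact le_of_lt h1
      · constructor
        · intro h; exact absurd h (ne_of_gt h1)
        · intro h; exact absurd (Finset.mem_filter.mp h).1 hMem
  -- trop at w'
  have htrop' : P.ltrop f w' = τ + ε * tv := by
    obtain ⟨u1, hu1⟩ := hMvne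
    have hu1s : u1 ∈ f.support := (Finset.mem_filter.mp (Finset.mem_filter.mp hu1).1).1
    refine P.ltrop_eq ⟨u1, mem_support_iff.mp hu1s, ((hcomp u1 hu1s).2).mpr hu1⟩
      fun u hu => (hcomp u (mem_support_iff.mpr hu)).1
  -- support of inF w f is Mw
  have hsuppG : ∀ u, coeff u (P.inF w f) ≠ 0 ↔ u ∈ Mw := by
    intro u
    rw [← mem_support_iff]
    rw [P.mem_support_inF, hMw, Finset.mem_filter, mem_support_iff]
  -- tropTriv of inF w f is tv
  have htropG : (PreVal.triv 𝕜).ltrop (P.inF w f) v = tv := by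
    obtain ⟨u1, hu1⟩ := hMvne
    obtain ⟨hu1Mw, hu1tv⟩ := Finset.mem_filter.mp hu1
    refine (PreVal.triv 𝕜).ltrop_eq ⟨u1, (hsuppG u1).mpr hu1Mw, ?_⟩ fun u hu => ?_
    · rw [triv_val_eq_zero, zero_add]
      exact hu1tv
    · rw [triv_val_eq_zero, zero_add]
      exact htv_le u ((hsuppG u).mp hu)
  -- final coefficientwise comparison
  apply MvPolynomial.ext
  intro u
  rw [(PreVal.triv 𝕜).coeff_inF, htropG]
  conv_rhs => rw [P.coeff_inF, htrop']
  by_cases hMem : u ∈ Mv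
  · have huMw : u ∈ Mw := (Finset.mem_filter.mp hMem).1
    have hcu : coeff u f ≠ 0 := mem_support_iff.mp (Finset.mem_filter.mp huMw).1
    have hlG : coeff u (P.inF w f) = P.ic (coeff u f) := by
      rw [P.coeff_inF, P.lc_of_eq hcu (Finset.mem_filter.mp huMw).2]
    rw [hlG]
    rw [(PreVal.triv 𝕜).lc_of_eq (P.ic_ne_zero hcu)
      (by rw [triv_val_eq_zero, zero_add]; exact (Finset.mem_filter.mp hMem).2)]
    rw [P.lc_of_eq hcu (((hcomp u (Finset.mem_filter.mp huMw).1).2).mpr hMem)]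
    rw [triv_ic]
  · -- u ∉ Mv : both sides vanish
    have hrhs : P.lc (τ + ε * tv) (dotN w' u) (coeff u f) = 0 := by
      refine P.lc_of_ne ?_
      rintro ⟨h1, h2⟩
      exact hMem (((hcomp u (mem_support_iff.mpr h1)).2).mp h2)
    rw [hrhs]
    rcases eq_or_ne (coeff u (P.inF w f)) 0 with h0 | h0
    · rw [h0, (PreVal.triv 𝕜).lc_zero]
    · have huMw : u ∈ Mw := (hsuppG u).mp h0
      refine (PreVal.triv 𝕜).lc_of_ne ?_
      rintro ⟨-, h2⟩
      rw [triv_val_eq_zero, zero_add] at h2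
      exact hMem (Finset.mem_filter.mpr ⟨huMw, h2⟩)

end PreVal
open MvPolynomial in
lemma exists_finset_span_eq {R : Type} [CommRing R] [IsNoetherianRing R] (S : Set R) :
    ∃ T : Finset R, ↑T ⊆ S ∧ Ideal.span (T : Set R) = Ideal.span S := by
  classical
  obtain ⟨G, hG⟩ := (IsNoetherian.noetherian (Ideal.span S))
  have hmem : ∀ x : G, ∃ T : Finset R, ↑T ⊆ S ∧ (x : R) ∈ Ideal.span (T : Set R) := by
    intro x
    have hx : (x : R) ∈ Ideal.span S := by
      rw [← hG]
      exact Submodule.subset_span x.2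
    exact Submodule.mem_span_finite_of_mem_span hx
  choose Tf hTfS hTfmem using hmem
  refine ⟨G.attach.biUnion Tf, ?_, ?_⟩
  · intro x hx
    rw [Finset.coe_biUnion] at hx
    simp only [Set.mem_iUnion] at hx
    obtain ⟨g, hg, hxg⟩ := hx
    exact hTfS g hxg
  · apply le_antisymm
    · rw [Ideal.span_le]
      intro x hx
      rw [Finset.coe_biUnion] at hx
      simp only [Set.mem_iUnion] at hx
      obtain ⟨g, hg, hxg⟩ := hx
      exact Ideal.subset_span (hTfS g hxg)
    · rw [← hG, show (Submodule.span R (↑G : Set R) ≤ Ideal.span ↑(G.attach.biUnion Tf))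
          ↔ (↑G : Set R) ⊆ ↑(Ideal.span (↑(G.attach.biUnion Tf) : Set R)) from Submodule.span_le]
      intro x hx
      have := hTfmem ⟨x, hx⟩
      refine Ideal.span_mono ?_ this
      intro y hy
      rw [Finset.coe_biUnion]
      simp only [Set.mem_iUnion]
      exact ⟨⟨x, hx⟩, Finset.mem_attach _ _, hy⟩

open MvPolynomial PreVal in
theorem initial_main {K 𝕜 : Type} [Field K] [Field 𝕜] (V : ValSetup K 𝕜)
    {n : ℕ} (I : Ideal (MvPolynomial (Fin (n+1)) K)) (hI : IsHomogIdeal I)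
    (w v : Fin (n+1) → ℝ) (hw : ∀ i, w i ∈ V.Gamma) :
    ∃ ε : ℝ, 0 < ε ∧ ∀ ε' : ℝ, 0 < ε' → ε' < ε →
      initialIdealTriv v (V.initialIdeal w I) = V.initialIdeal (w + ε' • v) I := by
  classical
  have hwP : ∀ i, w i ∈ (PreVal.ofVal V).SΓ := hw
  have hid : ∀ w0 : Fin (n+1) → ℝ,
      V.initialIdeal w0 I = Ideal.span ((PreVal.ofVal V).inFSet w0 (I : Set _)) :=
    fun _ => rfl
  have hidT : ∀ J : Ideal (MvPolynomial (Fin (n+1)) 𝕜),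
      initialIdealTriv v J = Ideal.span ((PreVal.triv 𝕜).inFSet v (J : Set _)) := by
    intro J
    unfold initialIdealTriv
    congr 1
    ext h
    constructor
    · rintro ⟨g, hg, rfl⟩
      exact ⟨g, hg, (PreVal.triv_inF v g).symm⟩
    · rintro ⟨g, hg, rfl⟩
      exact ⟨g, hg, (PreVal.triv_inF v g)⟩
  -- the composed generator set
  set Sc : Set (MvPolynomial (Fin (n+1)) 𝕜) :=
    {h | ∃ f ∈ I, h = (PreVal.triv 𝕜).inF v ((PreVal.ofVal V).inF w f)} with hSc
  have hLHS : initialIdealTriv v (V.initialIdeal w I) = Ideal.span Sc := by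
    rw [hidT]
    apply le_antisymm
    · rw [Ideal.span_le]
      rintro x ⟨g, hg, rfl⟩
      have hg' : g ∈ Submodule.span 𝕜 ((PreVal.ofVal V).inFSet w (I : Set _)) := by
        rw [← SetLike.mem_coe, ← (PreVal.ofVal V).span_inFSet_eq_kspan w I]
        exact hg
      obtain ⟨f, hf, rfl⟩ := V.exists_inF_of_mem_span I hwP hg'
      exact Ideal.subset_span ⟨f, hf, rfl⟩
    · rw [Ideal.span_le]
      rintro x ⟨f, hf, rfl⟩
      refine Ideal.subset_span ⟨(PreVal.ofVal V).inF w f, ?_, rfl⟩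
      exact Ideal.subset_span ⟨f, hf, rfl⟩
  obtain ⟨T0, hT0S, hT0span⟩ := exists_finset_span_eq Sc
  -- a uniform ε for the finitely many generators
  have hexists : ∀ x : T0, ∃ εx : ℝ, 0 < εx ∧ ∀ ε : ℝ, 0 < ε → ε < εx →
      (x : MvPolynomial (Fin (n+1)) 𝕜) ∈ V.initialIdeal (w + ε • v) I := by
    intro x
    obtain ⟨f, hf, hx⟩ := hT0S x.2
    obtain ⟨ε0, hε0, heq⟩ := (PreVal.ofVal V).exists_eps w v f
    refine ⟨ε0, hε0, fun ε h1 h2 => ?_⟩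
    rw [hx, heq ε h1 h2]
    exact Ideal.subset_span ⟨f, hf, rfl⟩
  choose εf hεfpos hεf using hexists
  refine ⟨if h : T0.Nonempty then (T0.attach.image εf).min'
      (by rwa [Finset.image_nonempty, Finset.attach_nonempty_iff]) else 1, ?_, ?_⟩
  · split_ifs with h
    · have hmem := Finset.min'_mem (T0.attach.image εf)
        (by rwa [Finset.image_nonempty, Finset.attach_nonempty_iff])
      rw [Finset.mem_image] at hmem
      obtain ⟨x, -, hx⟩ := hmem
      rw [← hx]
      exact hεfpos x
    · exact one_pos
  intro ε' hpos hlt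
  have hT0mem : ∀ x ∈ T0, x ∈ V.initialIdeal (w + ε' • v) I := by
    intro x hx
    have hne : T0.Nonempty := ⟨x, hx⟩
    rw [dif_pos hne] at hlt
    refine hεf ⟨x, hx⟩ ε' hpos (lt_of_lt_of_le hlt ?_)
    exact Finset.min'_le _ _ (Finset.mem_image_of_mem εf (Finset.mem_attach _ ⟨x, hx⟩))
  -- forward inclusion
  have hLR : initialIdealTriv v (V.initialIdeal w I) ≤ V.initialIdeal (w + ε' • v) I := by
    rw [hLHS, ← hT0span, Ideal.span_le]
    intro x hx
    exact hT0mem x hx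
  -- reverse inclusion via Hilbert-function count in each degree
  have hRL : V.initialIdeal (w + ε' • v) I ≤ initialIdealTriv v (V.initialIdeal w I) := by
    intro x hx
    rw [← sum_homogeneousComponent x]
    refine Ideal.sum_mem _ fun d _ => ?_
    set w' : Fin (n+1) → ℝ := w + ε' • v with hw'
    have hxC : homogeneousComponent d x ∈
        Submodule.span 𝕜 ((PreVal.ofVal V).inFSetM w' (idealPiece I d)) :=
      (PreVal.ofVal V).homogeneousComponent_mem_span I hI w' d hx
    haveI fdK : FiniteDimensional K (homogeneousSubmodule (Fin (n+1)) K d) :=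
      finiteDimensional_homogeneousSubmodule K (n+1) d
    haveI fdk : FiniteDimensional 𝕜 (homogeneousSubmodule (Fin (n+1)) 𝕜 d) :=
      finiteDimensional_homogeneousSubmodule 𝕜 (n+1) d
    have hPdle : idealPiece I d ≤ homogeneousSubmodule (Fin (n+1)) K d := inf_le_right
    have hJdle : idealPiece (V.initialIdeal w I) d ≤ homogeneousSubmodule (Fin (n+1)) 𝕜 d :=
      inf_le_right
    haveI : FiniteDimensional K (idealPiece I d) := Submodule.finiteDimensional_of_le hPdle
    haveI : FiniteDimensional 𝕜 (idealPiece (V.initialIdeal w I) d) :=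
      Submodule.finiteDimensional_of_le hJdle
    haveI : FiniteDimensional 𝕜
        (Submodule.span 𝕜 ((PreVal.ofVal V).inFSetM w' (idealPiece I d))) :=
      (PreVal.ofVal V).fd_span_inFSetM hPdle
    haveI : FiniteDimensional 𝕜
        (Submodule.span 𝕜 ((PreVal.triv 𝕜).inFSetM v (idealPiece (V.initialIdeal w I) d))) :=
      (PreVal.triv 𝕜).fd_span_inFSetM hJdle
    -- dimension chain
    have h1 : Module.finrank 𝕜
        (Submodule.span 𝕜 ((PreVal.ofVal V).inFSetM w' (idealPiece I d)))
        ≤ Module.finrank K (idealPiece I d) :=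
      (PreVal.ofVal V).finrank_span_inFSetM_le w' d _ hPdle
    have h2 : Module.finrank K (idealPiece I d) ≤ Module.finrank 𝕜
        (Submodule.span 𝕜 ((PreVal.ofVal V).inFSetM w (idealPiece I d))) :=
      (PreVal.ofVal V).gauss w d _ _ hPdle le_rfl
    have hBJ : Submodule.span 𝕜 ((PreVal.ofVal V).inFSetM w (idealPiece I d))
        ≤ idealPiece (V.initialIdeal w I) d := by
      rw [Submodule.span_le]
      rintro g ⟨f, hf, rfl⟩
      obtain ⟨hfI, hfh⟩ := mem_idealPiece.mp hf
      exact mem_idealPiece.mpr ⟨Ideal.subset_span ⟨f, hfI, rfl⟩,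
        (PreVal.ofVal V).inF_isHomogeneous hfh⟩
    have h3 : Module.finrank 𝕜
        (Submodule.span 𝕜 ((PreVal.ofVal V).inFSetM w (idealPiece I d)))
        ≤ Module.finrank 𝕜 (idealPiece (V.initialIdeal w I) d) :=
      Submodule.finrank_mono hBJ
    have h4 : Module.finrank 𝕜 (idealPiece (V.initialIdeal w I) d) ≤ Module.finrank 𝕜
        (Submodule.span 𝕜 ((PreVal.triv 𝕜).inFSetM v (idealPiece (V.initialIdeal w I) d))) :=
      (PreVal.triv 𝕜).gauss v d _ _ hJdle le_rfl
    -- A_d ≤ C_d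
    have hpieceC : (Ideal.span ((PreVal.ofVal V).inFSet w' (I : Set _))).restrictScalars 𝕜 ⊓
        homogeneousSubmodule (Fin (n+1)) 𝕜 d
        = Submodule.span 𝕜 ((PreVal.ofVal V).inFSetM w' (idealPiece I d)) :=
      (PreVal.ofVal V).piece_eq I hI w' d
    have hAC : Submodule.span 𝕜 ((PreVal.triv 𝕜).inFSetM v (idealPiece (V.initialIdeal w I) d))
        ≤ Submodule.span 𝕜 ((PreVal.ofVal V).inFSetM w' (idealPiece I d)) := by
      rw [← hpieceC, Submodule.span_le]
      rintro g ⟨gg, hgg, rfl⟩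
      obtain ⟨hggJ, hggh⟩ := mem_idealPiece.mp hgg
      refine Submodule.mem_inf.mpr ⟨?_,
        (mem_homogeneousSubmodule _ _).mpr ((PreVal.triv 𝕜).inF_isHomogeneous hggh)⟩
      show (PreVal.triv 𝕜).inF v gg ∈ V.initialIdeal w' I
      apply hLR
      rw [hidT]
      exact Ideal.subset_span ⟨gg, hggJ, rfl⟩
    have hACeq : Submodule.span 𝕜 ((PreVal.triv 𝕜).inFSetM v (idealPiece (V.initialIdeal w I) d))
        = Submodule.span 𝕜 ((PreVal.ofVal V).inFSetM w' (idealPiece I d)) :=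
      Submodule.eq_of_le_of_finrank_le hAC (by omega)
    -- conclude
    rw [← hACeq] at hxC
    have hCL : Submodule.span 𝕜
        ((PreVal.triv 𝕜).inFSetM v (idealPiece (V.initialIdeal w I) d))
        ≤ (initialIdealTriv v (V.initialIdeal w I)).restrictScalars 𝕜 := by
      rw [Submodule.span_le]
      rintro g ⟨gg, hgg, rfl⟩
      rw [SetLike.mem_coe, Submodule.restrictScalars_mem, hidT]
      exact Ideal.subset_span ⟨gg, (mem_idealPiece.mp hgg).1, rfl⟩
    exact hCL hxC
  exact le_antisymm hLR hRL

/-- (Corollary 3.4.)  Let `I` be a homogeneous ideal in `K[x_0,…,x_n]` and `w, v ∈ Γ^{n+1}`.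
Then there is `ε > 0` such that `in_v(in_w(I)) = in_{w+ε'v}(I)` for all `ε' ∈ Γ` with
`0 < ε' < ε`. -/
theorem initialIdeal_initialIdeal {K 𝕜 : Type} [Field K] [Field 𝕜] (V : ValSetup K 𝕜)
    (hdense : Dense V.Gamma) (hQ : ∀ q : ℚ, (q : ℝ) ∈ V.Gamma) {n : ℕ}
    (I : Ideal (MvPolynomial (Fin (n+1)) K)) (hI : IsHomogIdeal I)
    (w v : Fin (n+1) → ℝ) (hw : ∀ i, w i ∈ V.Gamma) (hv : ∀ i, v i ∈ V.Gamma) :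
    ∃ ε : ℝ, 0 < ε ∧ ∀ ε' : ℝ, ε' ∈ V.Gamma → 0 < ε' → ε' < ε →
      initialIdealTriv v (V.initialIdeal w I) = V.initialIdeal (w + ε' • v) I := by
  obtain ⟨ε, hε, h⟩ := initial_main V I hI w v hw
  exact ⟨ε, hε, fun ε' _ h1 h2 => h ε' h1 h2⟩
end
end
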